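/- arXiv:1810.02535 — 8 statements merged into one kernel-verified Lean document; each statement's English description precedes it below -/
import Mathlib

section
/- Let L ≥ 1 be an integer and let λ_sd, λ_sr, λ_sp, ψ, ξ > 0. Let X ~ Exp(λ_sd), Z ~ Gamma(shape L, rate λ_sr), and Y ~ Exp(λ_sp) be mutually independent. Then P[X ≥ ψ·Y and Z ≥ (ψ/ξ)·Y] = (1/(1 + λ_sd ψ/λ_sp))·(1 − (1 + λ_sd ξ/λ_sr + λ_sp ξ/(λ_sr ψ))^{−L}). (This is the paper's exact evaluation of p₃ = Pr[P_s|h_sd|²/N_o ≥ γ_th, ξP_s‖h_sr‖²/N_o ≥ γ_th].) -/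
open MeasureTheory ProbabilityTheory Real
open scoped ENNReal NNReal

section Helpers

open Set

lemma p3_expMeasure_Ici {r t : ℝ} (hr : 0 < r) (ht : 0 ≤ t) :
    expMeasure r (Ici t) = ENNReal.ofReal (exp (-(r * t))) := by
  have hP := isProbabilityMeasure_expMeasure hr
  have hsingleton : expMeasure r {t} = 0 := by
    rw [expMeasure, gammaMeasure, withDensity_apply _ (measurableSet_singleton t)]
    simp [lintegral_singleton]
  have hIic : expMeasure r (Iic t) = ENNReal.ofReal (1 - exp (-(r * t))) := by
    have : expMeasure r (Iic t) = ∫⁻ x in Iic t, exponentialPDF r x := by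
      rw [expMeasure, gammaMeasure, withDensity_apply _ measurableSet_Iic]; rfl
    rw [this, lintegral_exponentialPDF_eq_antiDeriv hr, if_pos ht]
  have hIio : expMeasure r (Iio t) = ENNReal.ofReal (1 - exp (-(r * t))) := by
    have h1 : Iic t = Iio t ∪ {t} := by ext x; simp [le_iff_lt_or_eq]
    have h3 : expMeasure r (Iic t) = expMeasure r (Iio t) + expMeasure r {t} := by
      rw [h1, measure_union (by simp) (measurableSet_singleton t)]
    rw [hsingleton, add_zero] at h3
    rw [← h3, hIic]
  have hcompl : expMeasure r (Ici t) = 1 - expMeasure r (Iio t) := by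
    rw [← compl_Iio, measure_compl measurableSet_Iio (measure_ne_top _ _), measure_univ]
  rw [hcompl, hIio]
  have h1 : exp (-(r * t)) ≤ 1 := exp_le_one_iff.mpr (by nlinarith)
  have h2 : ENNReal.ofReal (exp (-(r * t))) + ENNReal.ofReal (1 - exp (-(r * t))) = 1 := by
    rw [← ENNReal.ofReal_add (exp_pos _).le (by linarith), ← ENNReal.ofReal_one]
    norm_num
  exact (ENNReal.eq_sub_of_add_eq ENNReal.ofReal_ne_top h2).symm

lemma p3_inner_exp_integral {k a c : ℝ} (hk : 0 ≤ k) (ha : 0 < a) (hc : 0 ≤ c) :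
    ∫⁻ y in Ioc 0 c, ENNReal.ofReal (k * exp (-(a * y))) =
      ENNReal.ofReal ((k / a) * (1 - exp (-(a * c)))) := by
  rw [← ofReal_integral_eq_lintegral_ofReal]
  · congr 1
    rw [← intervalIntegral.integral_of_le hc]
    have hderiv : ∀ x ∈ uIcc (0:ℝ) c,
        HasDerivAt (fun y => -(k / a) * exp (-(a * y))) (k * exp (-(a * x))) x := by
      intro x _
      have h : HasDerivAt (fun y => -(k / a) * rexp (-a * id y))
          (-(k / a) * (rexp (-a * x) * (-a * 1))) x :=
        (((hasDerivAt_id x).const_mul (-a)).exp.const_mul (-(k / a)))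
      convert h using 1
      · ext y; simp [mul_comm, neg_mul]
      · field_simp
    rw [intervalIntegral.integral_eq_sub_of_hasDerivAt hderiv]
    · simp [Real.exp_zero]; ring
    · apply ContinuousOn.intervalIntegrable
      fun_prop
  · have h1 : IntegrableOn (fun y => rexp (-(a * y))) (Ioc 0 c) := by
      have := (exp_neg_integrableOn_Ioi (0:ℝ) ha).mono_set (Ioc_subset_Ioi_self : Ioc (0:ℝ) c ⊆ Ioi 0)
      simpa [neg_mul] using this
    exact h1.const_mul k
  · filter_upwards with y
    positivity

lemma p3_inner_y {lsd lsp ψ ξ : ℝ} (hlsd : 0 < lsd) (hlsp : 0 < lsp) (hψ : 0 < ψ) (hξ : 0 < ξ)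
    {z : ℝ} (hz : 0 ≤ z) :
    ∫⁻ y, Set.indicator {y : ℝ | ψ / ξ * y ≤ z}
        (fun y => expMeasure lsd (Ici (ψ * y))) y ∂(expMeasure lsp) =
      ENNReal.ofReal ((lsp / (lsp + lsd * ψ)) *
        (1 - exp (-((lsp + lsd * ψ) * (ξ / ψ) * z)))) := by
  set a := lsp + lsd * ψ with ha_def
  have ha : 0 < a := by positivity
  set c := ξ / ψ * z with hc_def
  have hc : 0 ≤ c := by positivity
  have hmono : Measurable fun y : ℝ => expMeasure lsd (Ici (ψ * y)) := by
    have h1 : Antitone fun t : ℝ => expMeasure lsd (Ici t) := fun s t hst =>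
      measure_mono (Ici_subset_Ici.mpr hst)
    exact (h1.measurable).comp (measurable_id.const_mul ψ)
  have hind : Measurable (Set.indicator {y : ℝ | ψ / ξ * y ≤ z}
      (fun y => expMeasure lsd (Ici (ψ * y)))) := by
    refine Measurable.indicator hmono ?_
    exact measurableSet_le (measurable_id.const_mul _) measurable_const
  have hpdfmeas : Measurable (gammaPDF 1 lsp) := (measurable_gammaPDFReal 1 lsp).ennreal_ofReal
  have hiff : ∀ y : ℝ, (ψ / ξ * y ≤ z ↔ y ≤ c) := by
    intro y
    rw [hc_def, div_mul_eq_mul_div, div_le_iff₀ hξ, show ξ / ψ * z = ξ * z / ψ by ring,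
      le_div_iff₀ hψ]
    constructor <;> intro h <;> nlinarith
  rw [expMeasure, gammaMeasure, lintegral_withDensity_eq_lintegral_mul _ hpdfmeas hind]
  have h0 : ∀ᵐ y : ℝ, y ≠ 0 := by
    rw [ae_iff]
    simpa using (by simp : (volume : Measure ℝ) ({0} : Set ℝ) = 0)
  have hcongr : (fun y => gammaPDF 1 lsp y * Set.indicator {y : ℝ | ψ / ξ * y ≤ z}
      (fun y => expMeasure lsd (Ici (ψ * y))) y)
      =ᵐ[volume] (Ioc 0 c).indicator (fun y => ENNReal.ofReal (lsp * exp (-(a * y)))) := by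
    filter_upwards [h0] with y hy0
    rcases lt_trichotomy y 0 with hneg | rfl | hpos
    · rw [gammaPDF_of_neg hneg, zero_mul, Set.indicator_of_notMem]
      simp only [Set.mem_Ioc, not_and_or, not_lt]
      exact Or.inl hneg.le
    · exact absurd rfl hy0
    · by_cases hyc : y ≤ c
      · have hcond : ψ / ξ * y ≤ z := (hiff y).mpr hyc
        rw [Set.indicator_of_mem (show y ∈ {y : ℝ | ψ / ξ * y ≤ z} from hcond),
          Set.indicator_of_mem (show y ∈ Ioc 0 c from ⟨hpos, hyc⟩),
          p3_expMeasure_Ici hlsd (by positivity), gammaPDF_of_nonneg hpos.le,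
          ← ENNReal.ofReal_mul (by positivity)]
        congr 1
        rw [Gamma_one, show (1:ℝ) - 1 = 0 by ring, rpow_one, rpow_zero, div_one, mul_one,
          mul_assoc, ← exp_add, show -(lsp * y) + -(lsd * (ψ * y)) = -(a * y) by
            rw [ha_def]; ring]
      · have hcond : ¬ (ψ / ξ * y ≤ z) := fun h => hyc ((hiff y).mp h)
        rw [Set.indicator_of_notMem (show y ∉ {y : ℝ | ψ / ξ * y ≤ z} from hcond), mul_zero,
          Set.indicator_of_notMem]
        simp only [Set.mem_Ioc, not_and_or, not_le]
        exact Or.inr (lt_of_not_ge hyc)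
  simp only [Pi.mul_apply]
  rw [lintegral_congr_ae hcongr, lintegral_indicator measurableSet_Ioc _]
  rw [p3_inner_exp_integral (by positivity) ha hc]
  congr 2
  rw [hc_def]; ring

lemma p3_lintegral_Iic_zero {h : ℝ → ℝ≥0∞} (hneg : ∀ z < (0:ℝ), h z = 0) :
    ∫⁻ z in Iic (0:ℝ), h z = 0 := by
  rw [lintegral_Iic_eq_lintegral_Iio_add_Icc _ le_rfl]
  have h1 : ∫⁻ z in Iio (0:ℝ), h z = 0 := by
    rw [setLIntegral_congr_fun measurableSet_Iio
      (fun z (hz : z < 0) => hneg z hz), lintegral_zero]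
  have h2 : ∫⁻ z in Icc (0:ℝ) 0, h z = 0 := by
    rw [Icc_self]
    exact setLIntegral_measure_zero _ _ (by simp)
  rw [h1, h2, add_zero]

lemma p3_lintegral_eq_Ioi {h : ℝ → ℝ≥0∞} (hneg : ∀ z < (0:ℝ), h z = 0) :
    ∫⁻ z, h z = ∫⁻ z in Ioi (0:ℝ), h z := by
  rw [← lintegral_add_compl h measurableSet_Ioi, compl_Ioi, p3_lintegral_Iic_zero hneg, add_zero]

lemma p3_integrableOn_pow_exp {s r : ℝ} (hs : -1 < s) (hr : 0 < r) :
    IntegrableOn (fun z : ℝ => z ^ s * exp (-(r * z))) (Ioi (0:ℝ)) := by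
  have := integrableOn_rpow_mul_exp_neg_mul_rpow hs zero_lt_one hr
  simpa [rpow_one, neg_mul] using this

end Helpers

/-- If `X ~ Exp(lsd)`, `Z ~ Gamma(L, lsr)` and `Y ~ Exp(lsp)` are mutually independent, then
`P[X ≥ ψ·Y ∧ Z ≥ (ψ/ξ)·Y] = (1/(1 + lsd ψ/lsp)) (1 − (1 + lsd ξ/lsr + lsp ξ/(lsr ψ))^{−L})`. -/
theorem p3_joint_success_probability
    {Ω : Type*} [MeasurableSpace Ω] (Pr : Measure Ω) [IsProbabilityMeasure Pr]
    (L : ℕ) (hL : 1 ≤ L) (lsd lsr lsp ψ ξ : ℝ)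
    (hlsd : 0 < lsd) (hlsr : 0 < lsr) (hlsp : 0 < lsp) (hψ : 0 < ψ) (hξ : 0 < ξ)
    (X Z Y : Ω → ℝ) (hX : Measurable X) (hZ : Measurable Z) (hY : Measurable Y)
    (hXd : Pr.map X = expMeasure lsd)
    (hZd : Pr.map Z = gammaMeasure L lsr)
    (hYd : Pr.map Y = expMeasure lsp)
    (hindep : iIndepFun ![X, Z, Y] Pr) :
    (Pr {ω | X ω ≥ ψ * Y ω ∧ Z ω ≥ (ψ / ξ) * Y ω}).toReal =
      (1 / (1 + lsd * ψ / lsp)) *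
        (1 - (1 + lsd * ξ / lsr + lsp * ξ / (lsr * ψ)) ^ (-(L : ℤ))) := by
  classical
  set μX := expMeasure lsd with hμX
  set μY := expMeasure lsp with hμY
  set μZ := gammaMeasure L lsr with hμZ
  set S : Set (ℝ × (ℝ × ℝ)) := {p | ψ * p.2.1 ≤ p.2.2 ∧ ψ / ξ * p.2.1 ≤ p.1} with hSdef
  have hLpos : (0:ℝ) < L := by exact_mod_cast Nat.lt_of_lt_of_le Nat.zero_lt_one hL
  haveI : IsProbabilityMeasure μX := isProbabilityMeasure_expMeasure hlsd
  haveI : IsProbabilityMeasure μY := isProbabilityMeasure_expMeasure hlsp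
  haveI : IsProbabilityMeasure μZ := isProbabilityMeasure_gammaMeasure hLpos hlsr
  have hS : MeasurableSet S :=
    MeasurableSet.inter
      (measurableSet_le (measurable_snd.fst.const_mul ψ) measurable_snd.snd)
      (measurableSet_le (measurable_snd.fst.const_mul (ψ / ξ)) measurable_fst)
  -- Step 1: reduce to a product measure
  have hmeas : ∀ i, Measurable (![X, Z, Y] i) := by
    intro i; fin_cases i <;> simpa
  have hYX : IndepFun Y X Pr := by
    have := hindep.indepFun (show (2 : Fin 3) ≠ 0 by decide)
    simpa using this
  have hmapYX : Pr.map (fun ω => (Y ω, X ω)) = μY.prod μX := by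
    rw [← hYd, ← hXd]
    exact (indepFun_iff_map_prod_eq_prod_map_map hY.aemeasurable hX.aemeasurable).mp hYX
  have hZYX : IndepFun Z (fun ω => (Y ω, X ω)) Pr := by
    have := hindep.indepFun_prodMk hmeas 2 0 1 (by decide) (by decide)
    simpa using this.symm
  have hmapT : Pr.map (fun ω => (Z ω, (Y ω, X ω))) = μZ.prod (μY.prod μX) := by
    rw [← hZd, ← hmapYX]
    exact (indepFun_iff_map_prod_eq_prod_map_map hZ.aemeasurable
      (hY.prodMk hX).aemeasurable).mp hZYX
  have hstep1 : Pr {ω | X ω ≥ ψ * Y ω ∧ Z ω ≥ (ψ / ξ) * Y ω} = (μZ.prod (μY.prod μX)) S := by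
    rw [← hmapT, Measure.map_apply (by fun_prop) hS]
    rfl
  -- Step 2: Fubini over z
  have hstep2 : (μZ.prod (μY.prod μX)) S =
      ∫⁻ z, (μY.prod μX) (Prod.mk z ⁻¹' S) ∂μZ := Measure.prod_apply hS
  -- Step 3: sections
  have hsection : ∀ z : ℝ, (μY.prod μX) (Prod.mk z ⁻¹' S) =
      ∫⁻ y, Set.indicator {y : ℝ | ψ / ξ * y ≤ z}
        (fun y => μX (Set.Ici (ψ * y))) y ∂μY := by
    intro z
    rw [Measure.prod_apply (measurable_prodMk_left hS)]
    refine lintegral_congr fun y => ?_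
    have hsec : Prod.mk y ⁻¹' (Prod.mk z ⁻¹' S) = {x : ℝ | ψ * y ≤ x ∧ ψ / ξ * y ≤ z} := rfl
    rw [hsec]
    by_cases hcase : ψ / ξ * y ≤ z
    · rw [Set.indicator_of_mem (show y ∈ {y : ℝ | ψ / ξ * y ≤ z} from hcase)]
      congr 1
      ext x
      simp [hcase]
    · rw [Set.indicator_of_notMem (show y ∉ {y : ℝ | ψ / ξ * y ≤ z} from hcase)]
      have : {x : ℝ | ψ * y ≤ x ∧ ψ / ξ * y ≤ z} = ∅ := by
        ext x; simp [hcase]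
      rw [this, measure_empty]
  -- constants
  set a := lsp + lsd * ψ with ha_def
  have ha : 0 < a := by positivity
  set k := lsp / a with hk_def
  have hk : 0 ≤ k := by positivity
  set b := a * (ξ / ψ) with hb_def
  have hb : 0 < b := by positivity
  set β := lsr + b with hβ_def
  have hβ : 0 < β := by positivity
  have hΓ : (0:ℝ) < Real.Gamma L := Real.Gamma_pos_of_pos hLpos
  -- measurable bits
  have hpdfM : Measurable (gammaPDF L lsr) := (measurable_gammaPDFReal _ _).ennreal_ofReal
  have hmeasI : Measurable fun z : ℝ => (μY.prod μX) (Prod.mk z ⁻¹' S) :=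
    measurable_measure_prodMk_left hS
  have hpdf_ne_top : ∀ x : ℝ, gammaPDF (L:ℝ) lsr x ≠ ⊤ := fun x => ENNReal.ofReal_ne_top
  -- step 4 : to a volume integral
  have hstep4 : (∫⁻ z, (μY.prod μX) (Prod.mk z ⁻¹' S) ∂μZ)
      = ∫⁻ z, gammaPDF L lsr z * (μY.prod μX) (Prod.mk z ⁻¹' S) := by
    rw [hμZ, gammaMeasure, lintegral_withDensity_eq_lintegral_mul _ hpdfM hmeasI]
    rfl
  set f : ℝ → ℝ≥0∞ := fun z => gammaPDF L lsr z * ENNReal.ofReal k with hf_def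
  set g : ℝ → ℝ≥0∞ := fun z =>
    gammaPDF L lsr z * ENNReal.ofReal (k * exp (-(b * z))) with hg_def
  have hFneg : ∀ z < (0:ℝ), gammaPDF (L:ℝ) lsr z * (μY.prod μX) (Prod.mk z ⁻¹' S) = 0 := by
    intro z hz; rw [gammaPDF_of_neg hz, zero_mul]
  have hFsplit : ∀ z ∈ Set.Ioi (0:ℝ),
      gammaPDF (L:ℝ) lsr z * (μY.prod μX) (Prod.mk z ⁻¹' S) = f z - g z := by
    intro z hz
    rw [hsection z, hμY, hμX, p3_inner_y hlsd hlsp hψ hξ (le_of_lt hz)]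
    rw [show (lsp + lsd * ψ) * (ξ / ψ) * z = b * z by rw [hb_def, ha_def]]
    rw [show lsp / (lsp + lsd * ψ) = k by rw [hk_def, ha_def]]
    rw [mul_one_sub, ENNReal.ofReal_sub _ (by positivity),
      ENNReal.mul_sub fun _ _ => hpdf_ne_top z]
  have hgM : Measurable g := by
    apply hpdfM.mul
    apply Measurable.ennreal_ofReal
    fun_prop
  have hpdf1 : ∫⁻ z in Set.Ioi (0:ℝ), gammaPDF (L:ℝ) lsr z = 1 := by
    have h1 := lintegral_gammaPDF_eq_one hLpos hlsr
    rwa [p3_lintegral_eq_Ioi (fun z hz => gammaPDF_of_neg hz)] at h1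
  have hf_int : ∫⁻ z in Set.Ioi (0:ℝ), f z = ENNReal.ofReal k := by
    rw [hf_def, lintegral_mul_const _ hpdfM, hpdf1, one_mul]
  have hlsrβ0 : 0 ≤ lsr / β := by positivity
  have hlsrβ1 : lsr / β ≤ 1 := by rw [div_le_one hβ]; linarith
  have hg_int : ∫⁻ z in Set.Ioi (0:ℝ), g z
      = ENNReal.ofReal (k * (lsr / β) ^ (L:ℝ)) := by
    rw [hg_def]
    rw [setLIntegral_congr_fun measurableSet_Ioi (fun z (hz : 0 < z) => ?_)]
    rotate_left
    · exact fun z => ENNReal.ofReal ((k * lsr ^ (L:ℝ) / Real.Gamma L) *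
        (z ^ ((L:ℝ) - 1) * exp (-(β * z))))
    · rw [gammaPDF_of_nonneg hz.le, ← ENNReal.ofReal_mul (by positivity)]
      congr 1
      rw [show -(β * z) = -(lsr * z) + -(b * z) by rw [hβ_def]; ring, exp_add]
      ring
    rw [← ofReal_integral_eq_lintegral_ofReal]
    · rw [MeasureTheory.integral_const_mul,
        integral_rpow_mul_exp_neg_mul_Ioi hLpos hβ]
      congr 1
      have hG : Real.Gamma (L:ℝ) ≠ 0 := hΓ.ne'
      have hβL : (0:ℝ) < β ^ (L:ℝ) := rpow_pos_of_pos hβ _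
      rw [div_rpow zero_le_one hβ.le, one_rpow, div_rpow hlsr.le hβ.le]
      field_simp
    · exact ((p3_integrableOn_pow_exp (by linarith) hβ).const_mul _)
    · refine (ae_restrict_iff' measurableSet_Ioi).mpr (ae_of_all _ fun z hz => ?_)
      have : (0:ℝ) < z := hz
      positivity
  have hle : ∀ z, g z ≤ f z := by
    intro z
    rcases lt_or_ge z 0 with hz | hz
    · rw [hg_def, hf_def]
      simp only [gammaPDF_of_neg hz, zero_mul, le_refl]
    · refine mul_le_mul_right (ENNReal.ofReal_le_ofReal ?_) _
      have he : exp (-(b * z)) ≤ 1 := exp_le_one_iff.mpr (by nlinarith)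
      nlinarith
  have hg_fin : ∫⁻ z in Set.Ioi (0:ℝ), g z ≠ ⊤ := by
    rw [hg_int]; exact ENNReal.ofReal_ne_top
  have hsub : ∫⁻ z in Set.Ioi (0:ℝ), (f z - g z)
      = ENNReal.ofReal k - ENNReal.ofReal (k * (lsr / β) ^ (L:ℝ)) := by
    rw [lintegral_sub hgM hg_fin (ae_of_all _ hle), hf_int, hg_int]
  have hrpow1 : (lsr / β) ^ (L:ℝ) ≤ 1 := Real.rpow_le_one hlsrβ0 hlsrβ1 (by positivity)
  have hfinal : (Pr {ω | X ω ≥ ψ * Y ω ∧ Z ω ≥ (ψ / ξ) * Y ω})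
      = ENNReal.ofReal (k - k * (lsr / β) ^ (L:ℝ)) := by
    rw [hstep1, hstep2, hstep4, p3_lintegral_eq_Ioi hFneg,
      setLIntegral_congr_fun measurableSet_Ioi hFsplit, hsub,
      ENNReal.ofReal_sub _ (by positivity)]
  rw [hfinal, ENNReal.toReal_ofReal (by nlinarith)]
  -- final algebra
  rw [rpow_natCast]
  have hw : (1 + lsd * ξ / lsr + lsp * ξ / (lsr * ψ)) = β / lsr := by
    rw [hβ_def, hb_def, ha_def]
    field_simp
    ring
  rw [hw, zpow_neg, zpow_natCast, ← inv_pow, inv_div]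
  rw [show (1:ℝ) / (1 + lsd * ψ / lsp) = k by rw [hk_def, ha_def]; field_simp]
  ring
end

section
/- Let (Ω, P) be a probability space carrying mutually independent random variables X ~ Exp(λ_sd), Y ~ Exp(λ_sp), Z ~ Gamma(shape L, rate λ_sr), and let ψ, ξ, ζ, R > 0. Set A = {X ≥ ψY}, B = {Z ≥ (ψ/ξ)Y}, and let C be any event with A ⊆ C. Define τ = (ζR/2)·P(B ∩ C) and τ_in = (ζR/2)·P(Aᶜ ∩ B ∩ C) + ζR·P(A). Then τ_in = τ + (ζR/2)·(1/(1 + λ_sd ψ/λ_sp))·(1 + (1 + λ_sd ξ/λ_sr + λ_sp ξ/(λ_sr ψ))^{−L}). (This is the paper's Lemma relating the throughput τ_in of incremental relaying to the throughput τ of the EH-CCRN scheme.) -/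
open MeasureTheory ProbabilityTheory Real

section IRTauxsec
open Set

open MeasureTheory ProbabilityTheory Real Set

namespace IRTaux

lemma expPDF_mul_exp {r s : ℝ} (hr : 0 < r) (hrs : 0 < r + s) (y : ℝ) :
    exponentialPDF r y * ENNReal.ofReal (Real.exp (-(s * y))) =
      ENNReal.ofReal (r / (r + s)) * exponentialPDF (r + s) y := by
  rcases lt_or_ge y 0 with h | h
  · rw [exponentialPDF_of_neg h, exponentialPDF_of_neg h, zero_mul, mul_zero]
  · rw [exponentialPDF_of_nonneg h, exponentialPDF_of_nonneg h,
      ← ENNReal.ofReal_mul (by positivity), ← ENNReal.ofReal_mul (by positivity)]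
    congr 1
    rw [mul_assoc, ← Real.exp_add, show -(r * y) + -(s * y) = -((r + s) * y) by ring]
    field_simp

lemma gammaPDF_mul_exp {a r s : ℝ} (ha : 0 < a) (hr : 0 < r) (hs : 0 ≤ s) (z : ℝ) :
    gammaPDF a r z * ENNReal.ofReal (Real.exp (-(s * z))) =
      ENNReal.ofReal ((r / (r + s)) ^ a) * gammaPDF a (r + s) z := by
  have hrs : 0 < r + s := by linarith
  rcases lt_or_ge z 0 with h | h
  · rw [gammaPDF_of_neg h, gammaPDF_of_neg h, zero_mul, mul_zero]
  · have h1 : (0:ℝ) ≤ r ^ a / Real.Gamma a * z ^ (a - 1) * Real.exp (-(r * z)) :=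
      mul_nonneg (mul_nonneg (div_nonneg (Real.rpow_nonneg hr.le a)
        (Real.Gamma_nonneg_of_nonneg ha.le)) (Real.rpow_nonneg h _)) (Real.exp_nonneg _)
    rw [gammaPDF_of_nonneg h, gammaPDF_of_nonneg h,
      ← ENNReal.ofReal_mul h1, ← ENNReal.ofReal_mul (by positivity)]
    congr 1
    rw [mul_assoc (r ^ a / Real.Gamma a * z ^ (a - 1)), ← Real.exp_add,
      show -(r * z) + -(s * z) = -((r + s) * z) by ring]
    have key : (r / (r + s)) ^ a * (r + s) ^ a = r ^ a := by
      rw [← Real.mul_rpow (by positivity) hrs.le, div_mul_cancel₀ _ hrs.ne']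
    rw [← key]
    ring

lemma lintegral_expPDF_mul_exp {r s : ℝ} (hr : 0 < r) (hs : 0 ≤ s) :
    ∫⁻ y, exponentialPDF r y * ENNReal.ofReal (Real.exp (-(s * y))) =
      ENNReal.ofReal (r / (r + s)) := by
  have hrs : 0 < r + s := by linarith
  simp_rw [expPDF_mul_exp hr hrs]
  rw [lintegral_const_mul' _ _ ENNReal.ofReal_ne_top, lintegral_exponentialPDF_eq_one hrs, mul_one]

lemma setLIntegral_expPDF_mul_exp {r s : ℝ} (hr : 0 < r) (hs : 0 ≤ s) (T : ℝ) :
    ∫⁻ y in Iic T, exponentialPDF r y * ENNReal.ofReal (Real.exp (-(s * y))) =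
      ENNReal.ofReal (r / (r + s)) *
        ENNReal.ofReal (if 0 ≤ T then 1 - Real.exp (-((r + s) * T)) else 0) := by
  have hrs : 0 < r + s := by linarith
  simp_rw [expPDF_mul_exp hr hrs]
  rw [lintegral_const_mul' _ _ ENNReal.ofReal_ne_top,
    lintegral_exponentialPDF_eq_antiDeriv hrs T]

lemma lintegral_gammaPDF_mul_exp {a r s : ℝ} (ha : 0 < a) (hr : 0 < r) (hs : 0 ≤ s) :
    ∫⁻ z, gammaPDF a r z * ENNReal.ofReal (Real.exp (-(s * z))) =
      ENNReal.ofReal ((r / (r + s)) ^ a) := by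
  have hrs : 0 < r + s := by linarith
  simp_rw [gammaPDF_mul_exp ha hr hs]
  rw [lintegral_const_mul' _ _ ENNReal.ofReal_ne_top, lintegral_gammaPDF_eq_one ha hrs, mul_one]

lemma expMeasure_Ici {r : ℝ} (hr : 0 < r) {t : ℝ} (ht : 0 ≤ t) :
    expMeasure r (Ici t) = ENNReal.ofReal (Real.exp (-(r * t))) := by
  have : IsProbabilityMeasure (expMeasure r) := isProbabilityMeasure_expMeasure hr
  have hIic : expMeasure r (Iic t) = ENNReal.ofReal (1 - Real.exp (-(r * t))) := by
    rw [show expMeasure r = volume.withDensity (gammaPDF 1 r) from rfl,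
      withDensity_apply _ measurableSet_Iic]
    have h1 := lintegral_exponentialPDF_eq_antiDeriv hr t
    rw [if_pos ht] at h1
    exact h1
  have hsing : expMeasure r {t} = 0 := by
    rw [show expMeasure r = volume.withDensity (gammaPDF 1 r) from rfl,
      withDensity_apply _ (measurableSet_singleton t)]
    exact setLIntegral_measure_zero _ _ (Real.volume_singleton)
  have hIoi : expMeasure r (Ioi t) = 1 - ENNReal.ofReal (1 - Real.exp (-(r * t))) := by
    have h2 := measure_compl (μ := expMeasure r) (measurableSet_Iic (a := t)) (measure_ne_top _ _)
    rw [compl_Iic] at h2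
    rw [h2, measure_univ, hIic]
  have hins : Ici t = {t} ∪ Ioi t := by
    ext x; simp only [mem_Ici, mem_union, mem_singleton_iff, mem_Ioi, le_iff_lt_or_eq]
    tauto
  have he : Real.exp (-(r * t)) ≤ 1 := by
    rw [← Real.exp_zero]
    exact Real.exp_le_exp.mpr (by nlinarith)
  rw [hins, measure_union (by simp) measurableSet_Ioi, hsing, zero_add, hIoi,
    ← ENNReal.ofReal_one, ← ENNReal.ofReal_sub 1 (sub_nonneg.mpr he), sub_sub_cancel]

lemma expPDF_eq_gammaPDF (r : ℝ) : exponentialPDF r = gammaPDF 1 r := rfl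

lemma measA {r q ψ : ℝ} (hr : 0 < r) (hq : 0 < q) (hψ : 0 < ψ) :
    ((expMeasure r).prod (expMeasure q)) {p : ℝ × ℝ | ψ * p.2 ≤ p.1} =
      ENNReal.ofReal (q / (q + r * ψ)) := by
  have h1 : IsProbabilityMeasure (expMeasure r) := isProbabilityMeasure_expMeasure hr
  have h2 : IsProbabilityMeasure (expMeasure q) := isProbabilityMeasure_expMeasure hq
  have hS : MeasurableSet {p : ℝ × ℝ | ψ * p.2 ≤ p.1} :=
    measurableSet_le (measurable_snd.const_mul ψ) measurable_fst
  rw [Measure.prod_apply_symm hS]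
  have hpre : ∀ y : ℝ, ((fun x => (x, y)) ⁻¹' {p : ℝ × ℝ | ψ * p.2 ≤ p.1}) = Ici (ψ * y) :=
    fun y => rfl
  simp_rw [hpre]
  have hg : Measurable fun y : ℝ => expMeasure r (Ici (ψ * y)) := by
    have hanti : Antitone fun t : ℝ => expMeasure r (Ici t) :=
      fun u v huv => measure_mono (Ici_subset_Ici.mpr huv)
    exact hanti.measurable.comp (measurable_const_mul ψ)
  have hf : Measurable (gammaPDF 1 q) := (measurable_gammaPDFReal 1 q).ennreal_ofReal
  rw [show expMeasure q = volume.withDensity (gammaPDF 1 q) from rfl,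
    lintegral_withDensity_eq_lintegral_mul volume hf hg]
  have hpt : ∀ y : ℝ, (gammaPDF 1 q * fun y => expMeasure r (Ici (ψ * y))) y =
      exponentialPDF q y * ENNReal.ofReal (Real.exp (-(r * ψ * y))) := by
    intro y
    simp only [Pi.mul_apply, ← expPDF_eq_gammaPDF]
    rcases lt_or_ge y 0 with h | h
    · rw [exponentialPDF_of_neg h, zero_mul, zero_mul]
    · rw [expMeasure_Ici hr (by positivity), show r * (ψ * y) = r * ψ * y by ring]
  simp_rw [hpt]
  rw [lintegral_expPDF_mul_exp hq (by positivity), show q + r * ψ = q + r * ψ from rfl]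

end IRTaux

namespace IRTaux
lemma measAB {r q g ψ ξ : ℝ} (L : ℕ) (hL : 1 ≤ L) (hr : 0 < r) (hq : 0 < q) (hgam : 0 < g)
    (hψ : 0 < ψ) (hξ : 0 < ξ) :
    (((expMeasure r).prod (gammaMeasure L g)).prod (expMeasure q))
        {p : (ℝ × ℝ) × ℝ | ψ * p.2 ≤ p.1.1 ∧ ψ / ξ * p.2 ≤ p.1.2} =
      ENNReal.ofReal ((q / (q + r * ψ)) *
        (1 - (g / (g + (q + r * ψ) * (ξ / ψ))) ^ (L : ℝ))) := by
  have haL : (0:ℝ) < L := by exact_mod_cast Nat.lt_of_lt_of_le Nat.zero_lt_one hL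
  have h1 : IsProbabilityMeasure (expMeasure r) := isProbabilityMeasure_expMeasure hr
  have h2 : IsProbabilityMeasure (expMeasure q) := isProbabilityMeasure_expMeasure hq
  have h3 : IsProbabilityMeasure (gammaMeasure L g) := isProbabilityMeasure_gammaMeasure haL hgam
  have hS : MeasurableSet {p : (ℝ × ℝ) × ℝ | ψ * p.2 ≤ p.1.1 ∧ ψ / ξ * p.2 ≤ p.1.2} :=
    MeasurableSet.inter
      (measurableSet_le (measurable_snd.const_mul ψ) (measurable_fst.comp measurable_fst))
      (measurableSet_le (measurable_snd.const_mul (ψ / ξ)) (measurable_snd.comp measurable_fst))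
  rw [Measure.prod_apply_symm hS]
  have hpre : ∀ y : ℝ, ((fun u : ℝ × ℝ => (u, y)) ⁻¹'
      {p : (ℝ × ℝ) × ℝ | ψ * p.2 ≤ p.1.1 ∧ ψ / ξ * p.2 ≤ p.1.2}) =
      Ici (ψ * y) ×ˢ Ici (ψ / ξ * y) := by
    intro y; ext u
    simp only [mem_preimage, mem_setOf_eq, Set.mem_prod, mem_Ici]
  simp_rw [hpre, Measure.prod_prod]
  have hgmeas : Measurable fun y : ℝ =>
      expMeasure r (Ici (ψ * y)) * gammaMeasure L g (Ici (ψ / ξ * y)) := by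
    have hanti1 : Antitone fun t : ℝ => expMeasure r (Ici t) :=
      fun u v huv => measure_mono (Ici_subset_Ici.mpr huv)
    have hanti2 : Antitone fun t : ℝ => gammaMeasure (L : ℝ) g (Ici t) :=
      fun u v huv => measure_mono (Ici_subset_Ici.mpr huv)
    exact (hanti1.measurable.comp (measurable_const_mul ψ)).mul
      (hanti2.measurable.comp (measurable_const_mul (ψ / ξ)))
  have hf : Measurable (gammaPDF 1 q) := (measurable_gammaPDFReal 1 q).ennreal_ofReal
  rw [show expMeasure q = volume.withDensity (gammaPDF 1 q) from rfl,
    lintegral_withDensity_eq_lintegral_mul volume hf hgmeas]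
  have hpt : ∀ y : ℝ, (gammaPDF 1 q * fun y =>
      expMeasure r (Ici (ψ * y)) * gammaMeasure L g (Ici (ψ / ξ * y))) y =
      ∫⁻ z, (exponentialPDF q y * ENNReal.ofReal (Real.exp (-(r * ψ * y)))) *
        (Ici (ψ / ξ * y)).indicator (gammaPDF L g) z := by
    intro y
    rw [lintegral_const_mul' _ _ (show exponentialPDF q y *
        ENNReal.ofReal (Real.exp (-(r * ψ * y))) ≠ ⊤ from
        ENNReal.mul_ne_top ENNReal.ofReal_ne_top ENNReal.ofReal_ne_top),
      lintegral_indicator measurableSet_Ici, ← withDensity_apply _ measurableSet_Ici]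
    simp only [Pi.mul_apply, ← expPDF_eq_gammaPDF]
    show exponentialPDF q y * (expMeasure r (Ici (ψ * y)) * gammaMeasure L g (Ici (ψ / ξ * y)))
      = exponentialPDF q y * ENNReal.ofReal (Real.exp (-(r * ψ * y)))
        * gammaMeasure L g (Ici (ψ / ξ * y))
    rcases lt_or_ge y 0 with h | h
    · rw [exponentialPDF_of_neg h, zero_mul, zero_mul, zero_mul]
    · rw [expMeasure_Ici hr (by positivity), show r * (ψ * y) = r * ψ * y by ring]
      ring
  simp_rw [hpt]
  -- swap the order of integration
  have hDm : MeasurableSet {p : ℝ × ℝ | ψ / ξ * p.1 ≤ p.2} :=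
    measurableSet_le (measurable_fst.const_mul (ψ / ξ)) measurable_snd
  have h_expPart : Measurable fun y : ℝ =>
      exponentialPDF q y * ENNReal.ofReal (Real.exp (-(r * ψ * y))) :=
    (measurable_exponentialPDFReal q).ennreal_ofReal.mul
      ((Real.measurable_exp.comp (measurable_const_mul (r * ψ)).neg).ennreal_ofReal)
  have hunc : (fun p : ℝ × ℝ =>
      (exponentialPDF q p.1 * ENNReal.ofReal (Real.exp (-(r * ψ * p.1)))) *
        (Ici (ψ / ξ * p.1)).indicator (gammaPDF L g) p.2) =
      fun p : ℝ × ℝ =>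
        (exponentialPDF q p.1 * ENNReal.ofReal (Real.exp (-(r * ψ * p.1)))) *
        (gammaPDF L g p.2 * {p : ℝ × ℝ | ψ / ξ * p.1 ≤ p.2}.indicator 1 p) := by
    funext p
    by_cases hc : ψ / ξ * p.1 ≤ p.2
    · rw [Set.indicator_of_mem (mem_Ici.mpr hc), Set.indicator_of_mem (by exact hc), Pi.one_apply,
        mul_one]
    · have hn1 : p.2 ∉ Ici (ψ / ξ * p.1) := fun hmem => hc hmem
      have hn2 : p ∉ {p : ℝ × ℝ | ψ / ξ * p.1 ≤ p.2} := hc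
      rw [Set.indicator_of_notMem hn1, Set.indicator_of_notMem hn2]
      simp
  have hmunc : Measurable fun p : ℝ × ℝ =>
      (exponentialPDF q p.1 * ENNReal.ofReal (Real.exp (-(r * ψ * p.1)))) *
        (gammaPDF L g p.2 * {p : ℝ × ℝ | ψ / ξ * p.1 ≤ p.2}.indicator 1 p) :=
    (h_expPart.comp measurable_fst).mul
      (((measurable_gammaPDFReal L g).ennreal_ofReal.comp measurable_snd).mul
        (measurable_one.indicator hDm))
  rw [lintegral_lintegral_swap (by rw [show Function.uncurry (fun y z : ℝ =>
      (exponentialPDF q y * ENNReal.ofReal (Real.exp (-(r * ψ * y)))) *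
        (Ici (ψ / ξ * y)).indicator (gammaPDF L g) z) = _ from hunc]; exact hmunc.aemeasurable)]
  -- inner integral over y
  have hinner : ∀ z : ℝ, (∫⁻ y,
      (exponentialPDF q y * ENNReal.ofReal (Real.exp (-(r * ψ * y)))) *
        (Ici (ψ / ξ * y)).indicator (gammaPDF L g) z) =
      gammaPDF L g z * (ENNReal.ofReal (q / (q + r * ψ)) *
        ENNReal.ofReal (if 0 ≤ z * (ξ / ψ) then
          1 - Real.exp (-((q + r * ψ) * (z * (ξ / ψ)))) else 0)) := by
    intro z
    have hiff : ∀ y : ℝ, (ψ / ξ * y ≤ z) ↔ (y ≤ z * (ξ / ψ)) := by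
      intro y
      rw [div_mul_eq_mul_div, div_le_iff₀ hξ, show z * (ξ / ψ) = z * ξ / ψ by ring,
        le_div_iff₀ hψ, mul_comm y ψ]
    have hrw : ∀ y : ℝ, (exponentialPDF q y * ENNReal.ofReal (Real.exp (-(r * ψ * y)))) *
        (Ici (ψ / ξ * y)).indicator (gammaPDF L g) z =
        (Iic (z * (ξ / ψ))).indicator
          (fun y' => (exponentialPDF q y' * ENNReal.ofReal (Real.exp (-(r * ψ * y')))) *
            gammaPDF L g z) y := by
      intro y
      by_cases hc : y ≤ z * (ξ / ψ)
      · rw [Set.indicator_of_mem (mem_Ici.mpr ((hiff y).mpr hc)),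
          Set.indicator_of_mem (mem_Iic.mpr hc)]
      · have hn1 : z ∉ Ici (ψ / ξ * y) := fun hmem => hc ((hiff y).mp hmem)
        have hn2 : y ∉ Iic (z * (ξ / ψ)) := fun hmem => hc hmem
        rw [Set.indicator_of_notMem hn1, Set.indicator_of_notMem hn2, mul_zero]
    simp_rw [hrw]
    rw [lintegral_indicator measurableSet_Iic,
      lintegral_mul_const' _ _ (show gammaPDF (L : ℝ) g z ≠ ⊤ from ENNReal.ofReal_ne_top),
      setLIntegral_expPDF_mul_exp hq (by positivity) (z * (ξ / ψ))]
    ring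
  simp_rw [hinner]
  -- pointwise: turn the if into a subtraction
  have hpt2 : ∀ z : ℝ, gammaPDF L g z * (ENNReal.ofReal (q / (q + r * ψ)) *
        ENNReal.ofReal (if 0 ≤ z * (ξ / ψ) then
          1 - Real.exp (-((q + r * ψ) * (z * (ξ / ψ)))) else 0)) =
      ENNReal.ofReal (q / (q + r * ψ)) *
        (gammaPDF L g z - gammaPDF L g z *
          ENNReal.ofReal (Real.exp (-((q + r * ψ) * (ξ / ψ) * z)))) := by
    intro z
    rcases lt_or_ge z 0 with h | h
    · rw [gammaPDF_of_neg h]; simp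
    · rw [if_pos (by positivity), show (q + r * ψ) * (z * (ξ / ψ)) = (q + r * ψ) * (ξ / ψ) * z
        by ring, ENNReal.ofReal_sub 1 (Real.exp_nonneg _), ENNReal.ofReal_one, mul_left_comm,
        ENNReal.mul_sub (fun _ _ => show gammaPDF (L : ℝ) g z ≠ ⊤ from ENNReal.ofReal_ne_top),
        mul_one]
  simp_rw [hpt2]
  have hsgnn : (0:ℝ) ≤ (q + r * ψ) * (ξ / ψ) := by positivity
  have hgm : Measurable fun z : ℝ => gammaPDF (L : ℝ) g z *
      ENNReal.ofReal (Real.exp (-((q + r * ψ) * (ξ / ψ) * z))) :=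
    (measurable_gammaPDFReal L g).ennreal_ofReal.mul
      ((Real.measurable_exp.comp (measurable_const_mul _).neg).ennreal_ofReal)
  have hfin : (∫⁻ z, gammaPDF (L : ℝ) g z *
      ENNReal.ofReal (Real.exp (-((q + r * ψ) * (ξ / ψ) * z)))) ≠ ⊤ := by
    rw [lintegral_gammaPDF_mul_exp haL hgam hsgnn]; exact ENNReal.ofReal_ne_top
  have hle : (fun z : ℝ => gammaPDF (L : ℝ) g z *
      ENNReal.ofReal (Real.exp (-((q + r * ψ) * (ξ / ψ) * z)))) ≤ᵐ[volume]
      fun z => gammaPDF (L : ℝ) g z := by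
    refine Filter.Eventually.of_forall fun z => ?_
    dsimp only
    rcases lt_or_ge z 0 with h | h
    · rw [gammaPDF_of_neg h, zero_mul]
    · calc gammaPDF (L : ℝ) g z * ENNReal.ofReal (Real.exp (-((q + r * ψ) * (ξ / ψ) * z)))
          ≤ gammaPDF (L : ℝ) g z * 1 := by
            refine mul_le_mul_right (ENNReal.ofReal_le_one.mpr ?_) _
            rw [← Real.exp_zero]
            exact Real.exp_le_exp.mpr (by nlinarith [mul_nonneg hsgnn h])
        _ = gammaPDF (L : ℝ) g z := mul_one _
  rw [lintegral_const_mul' _ _ ENNReal.ofReal_ne_top, lintegral_sub hgm hfin hle,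
    lintegral_gammaPDF_eq_one haL hgam, lintegral_gammaPDF_mul_exp haL hgam hsgnn,
    ← ENNReal.ofReal_one, ← ENNReal.ofReal_sub 1 (Real.rpow_nonneg (by positivity) _),
    ← ENNReal.ofReal_mul (by positivity)]
end IRTaux
end IRTauxsec


/-- Relation between the throughput `τ_in` of incremental relaying and the throughput `τ`
of the EH-CCRN scheme: with `A = {X ≥ ψY}`, `B = {Z ≥ (ψ/ξ)Y}` and any event `C ⊇ A`,
`τ_in = τ + (ζR/2)·(1/(1 + lsd ψ/lsp))·(1 + (1 + lsd ξ/lsr + lsp ξ/(lsr ψ))^{−L})`. -/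
theorem incremental_relaying_throughput_relation
    {Ω : Type*} [MeasurableSpace Ω] (Pr : Measure Ω) [IsProbabilityMeasure Pr]
    (L : ℕ) (hL : 1 ≤ L) (lsd lsp lsr ψ ξ ζ R : ℝ)
    (hlsd : 0 < lsd) (hlsp : 0 < lsp) (hlsr : 0 < lsr)
    (hψ : 0 < ψ) (hξ : 0 < ξ) (hζ : 0 < ζ) (hR : 0 < R)
    (X Y Z : Ω → ℝ) (hX : Measurable X) (hY : Measurable Y) (hZ : Measurable Z)
    (hXd : Pr.map X = expMeasure lsd)
    (hYd : Pr.map Y = expMeasure lsp)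
    (hZd : Pr.map Z = gammaMeasure L lsr)
    (hindep : iIndepFun (m := fun _ : Fin 3 => (inferInstance : MeasurableSpace ℝ)) ![X, Y, Z] Pr)
    (C : Set Ω) (hC : MeasurableSet C)
    (hAC : {ω | X ω ≥ ψ * Y ω} ⊆ C)
    (τ τin : ℝ)
    (hτ : τ = (ζ * R / 2) * (Pr ({ω | Z ω ≥ (ψ / ξ) * Y ω} ∩ C)).toReal)
    (hτin : τin =
      (ζ * R / 2) * (Pr ({ω | X ω ≥ ψ * Y ω}ᶜ ∩ {ω | Z ω ≥ (ψ / ξ) * Y ω} ∩ C)).toReal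
        + ζ * R * (Pr {ω | X ω ≥ ψ * Y ω}).toReal) :
    τin = τ + (ζ * R / 2) * (1 / (1 + lsd * ψ / lsp)) *
      (1 + (1 + lsd * ξ / lsr + lsp * ξ / (lsr * ψ)) ^ (-(L : ℤ))) := by
  have hA : MeasurableSet {ω | X ω ≥ ψ * Y ω} := measurableSet_le (hY.const_mul ψ) hX
  have hB : MeasurableSet {ω | Z ω ≥ ψ / ξ * Y ω} := measurableSet_le (hY.const_mul (ψ / ξ)) hZ
  have hmeas : ∀ i : Fin 3, Measurable (![X, Y, Z] i) := by
    intro i; fin_cases i <;> assumption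
  have hXY : IndepFun X Y Pr := hindep.indepFun (show (0 : Fin 3) ≠ 1 by decide)
  have hXZ : IndepFun X Z Pr := hindep.indepFun (show (0 : Fin 3) ≠ 2 by decide)
  have hXZY : IndepFun (fun ω => (X ω, Z ω)) Y Pr :=
    hindep.indepFun_prodMk hmeas 0 2 1 (by decide) (by decide)
  have hmapXY : Pr.map (fun ω => (X ω, Y ω)) = (expMeasure lsd).prod (expMeasure lsp) := by
    rw [(indepFun_iff_map_prod_eq_prod_map_map hX.aemeasurable hY.aemeasurable).mp hXY, hXd, hYd]
  have hmapXZ : Pr.map (fun ω => (X ω, Z ω)) = (expMeasure lsd).prod (gammaMeasure L lsr) := by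
    rw [(indepFun_iff_map_prod_eq_prod_map_map hX.aemeasurable hZ.aemeasurable).mp hXZ, hXd, hZd]
  have hmapW : Pr.map (fun ω => ((X ω, Z ω), Y ω)) =
      ((expMeasure lsd).prod (gammaMeasure L lsr)).prod (expMeasure lsp) := by
    rw [(indepFun_iff_map_prod_eq_prod_map_map (hX.prodMk hZ).aemeasurable
      hY.aemeasurable).mp hXZY, hmapXZ, hYd]
  have hSxy : MeasurableSet {p : ℝ × ℝ | ψ * p.2 ≤ p.1} :=
    measurableSet_le (measurable_snd.const_mul ψ) measurable_fst
  have hSS : MeasurableSet {p : (ℝ × ℝ) × ℝ | ψ * p.2 ≤ p.1.1 ∧ ψ / ξ * p.2 ≤ p.1.2} :=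
    MeasurableSet.inter
      (measurableSet_le (measurable_snd.const_mul ψ) (measurable_fst.comp measurable_fst))
      (measurableSet_le (measurable_snd.const_mul (ψ / ξ)) (measurable_snd.comp measurable_fst))
  have hPA : Pr {ω | X ω ≥ ψ * Y ω} = ENNReal.ofReal (lsp / (lsp + lsd * ψ)) := by
    have h0 : {ω | X ω ≥ ψ * Y ω} = (fun ω => (X ω, Y ω)) ⁻¹' {p : ℝ × ℝ | ψ * p.2 ≤ p.1} := rfl
    rw [h0, ← Measure.map_apply (hX.prodMk hY) hSxy, hmapXY, IRTaux.measA hlsd hlsp hψ]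
  have hPAB : Pr ({ω | X ω ≥ ψ * Y ω} ∩ {ω | Z ω ≥ ψ / ξ * Y ω}) =
      ENNReal.ofReal ((lsp / (lsp + lsd * ψ)) *
        (1 - (lsr / (lsr + (lsp + lsd * ψ) * (ξ / ψ))) ^ (L : ℝ))) := by
    have h0 : {ω | X ω ≥ ψ * Y ω} ∩ {ω | Z ω ≥ ψ / ξ * Y ω} =
        (fun ω => ((X ω, Z ω), Y ω)) ⁻¹'
          {p : (ℝ × ℝ) × ℝ | ψ * p.2 ≤ p.1.1 ∧ ψ / ξ * p.2 ≤ p.1.2} := rfl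
    rw [h0, ← Measure.map_apply ((hX.prodMk hZ).prodMk hY) hSS, hmapW,
      IRTaux.measAB L hL hlsd hlsp hlsr hψ hξ]
  have hsubset : {ω | X ω ≥ ψ * Y ω} ∩ {ω | Z ω ≥ ψ / ξ * Y ω} ⊆
      {ω | Z ω ≥ ψ / ξ * Y ω} ∩ C := fun ω hω => ⟨hω.2, hAC hω.1⟩
  have hseteq : {ω | X ω ≥ ψ * Y ω}ᶜ ∩ {ω | Z ω ≥ ψ / ξ * Y ω} ∩ C =
      ({ω | Z ω ≥ ψ / ξ * Y ω} ∩ C) \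
        ({ω | X ω ≥ ψ * Y ω} ∩ {ω | Z ω ≥ ψ / ξ * Y ω}) := by
    ext ω
    simp only [Set.mem_inter_iff, Set.mem_compl_iff, Set.mem_diff, Set.mem_setOf_eq]
    tauto
  have hsub : (Pr ({ω | X ω ≥ ψ * Y ω}ᶜ ∩ {ω | Z ω ≥ ψ / ξ * Y ω} ∩ C)).toReal =
      (Pr ({ω | Z ω ≥ ψ / ξ * Y ω} ∩ C)).toReal -
        (Pr ({ω | X ω ≥ ψ * Y ω} ∩ {ω | Z ω ≥ ψ / ξ * Y ω})).toReal := by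
    rw [hseteq, measure_diff hsubset (hA.inter hB).nullMeasurableSet (measure_ne_top Pr _),
      ENNReal.toReal_sub_of_le (measure_mono hsubset) (measure_ne_top Pr _)]
  have hw : (lsr / (lsr + (lsp + lsd * ψ) * (ξ / ψ))) ^ (L : ℝ) =
      (lsr / (lsr + (lsp + lsd * ψ) * (ξ / ψ))) ^ L := Real.rpow_natCast _ L
  have hw1 : (lsr / (lsr + (lsp + lsd * ψ) * (ξ / ψ))) ^ L ≤ 1 := by
    apply pow_le_one₀ (by positivity)
    rw [div_le_one (by positivity)]
    nlinarith [mul_pos (show (0:ℝ) < lsp + lsd * ψ by positivity) (div_pos hξ hψ)]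
  have hMw : (1 + lsd * ξ / lsr + lsp * ξ / (lsr * ψ)) ^ (-(L : ℤ)) =
      (lsr / (lsr + (lsp + lsd * ψ) * (ξ / ψ))) ^ L := by
    have hM : 1 + lsd * ξ / lsr + lsp * ξ / (lsr * ψ) =
        (lsr + (lsp + lsd * ψ) * (ξ / ψ)) / lsr := by
      field_simp
      ring
    rw [hM, zpow_neg, zpow_natCast, ← inv_pow, inv_div]
  have hfrac : 1 / (1 + lsd * ψ / lsp) = lsp / (lsp + lsd * ψ) := by
    rw [show 1 + lsd * ψ / lsp = (lsp + lsd * ψ) / lsp by field_simp, one_div, inv_div]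
  rw [hτin, hτ, hsub, hPA, hPAB,
    ENNReal.toReal_ofReal (mul_nonneg (by positivity)
      (sub_nonneg.mpr (by rw [hw]; exact hw1))),
    ENNReal.toReal_ofReal (show (0:ℝ) ≤ lsp / (lsp + lsd * ψ) by positivity)]
  rw [hfrac, hMw, hw]
  ring
end

section
/- Let λ_rd, λ_rp, P, I, x > 0. Let H ~ Exp(λ_rd) and G ~ Exp(λ_rp) be independent. Then P[min(P, I/G)·H < x] = 1 − e^{−λ_rd x/P}·(1 − ((λ_rd x/(I λ_rp))/(1 + λ_rd x/(I λ_rp)))·e^{−λ_rp I/P}). (This is the paper's exact conditional CDF F_{X_j}(x | ʰP_r) of the per-antenna second-hop SNR numerator X_j = min(ʰP_r, I/|g_rp|²)·|h_rd|² given the harvested power ʰP_r = P.) -/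
open MeasureTheory ProbabilityTheory Real

section SecondHopHelpers
open Set


open MeasureTheory ProbabilityTheory Real Set

lemma integral_exp_neg_mul_Ioi1 {b : ℝ} (hb : 0 < b) (a : ℝ) :
    ∫ y in Ioi a, Real.exp (-(b * y)) = Real.exp (-(b * a)) / b := by
  have hderiv : ∀ y ∈ Ici a, HasDerivAt (fun z => -Real.exp (-(b * z)) / b)
      (Real.exp (-(b * y))) y := by
    intro y _
    have h := (ProbabilityTheory.hasDerivAt_neg_exp_mul_exp (r := b) (x := y)).div_const b
    simpa [mul_div_assoc, mul_div_cancel_left₀ _ hb.ne'] using h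
  have hint : IntegrableOn (fun y => Real.exp (-(b * y))) (Ioi a) := by
    simpa [neg_mul] using exp_neg_integrableOn_Ioi a hb
  have htend : Filter.Tendsto (fun z => -Real.exp (-(b * z)) / b) Filter.atTop (nhds 0) := by
    have h1 : Filter.Tendsto (fun z => b * z) Filter.atTop Filter.atTop :=
      Filter.tendsto_id.const_mul_atTop hb
    have : Filter.Tendsto (fun z => Real.exp (-(b * z))) Filter.atTop (nhds 0) :=
      Real.tendsto_exp_neg_atTop_nhds_zero.comp h1
    simpa using (this.neg.div_const b)
  have := MeasureTheory.integral_Ioi_of_hasDerivAt_of_tendsto' hderiv hint htend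
  rw [this]; ring

lemma expMeasure_Iio1 {r t : ℝ} (hr : 0 < r) (ht : 0 ≤ t) :
    expMeasure r (Iio t) = ENNReal.ofReal (1 - Real.exp (-(r * t))) := by
  rw [expMeasure, gammaMeasure, withDensity_apply _ measurableSet_Iio]
  have : (volume : Measure ℝ).restrict (Iio t) = volume.restrict (Iic t) :=
    Measure.restrict_congr_set Iio_ae_eq_Iic
  rw [show gammaPDF 1 r = exponentialPDF r from rfl, this,
    ProbabilityTheory.lintegral_exponentialPDF_eq_antiDeriv hr, if_pos ht]

lemma expMeasure_Iic1 {r t : ℝ} (hr : 0 < r) (ht : 0 ≤ t) :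
    expMeasure r (Iic t) = ENNReal.ofReal (1 - Real.exp (-(r * t))) := by
  rw [expMeasure, gammaMeasure, withDensity_apply _ measurableSet_Iic]
  rw [show gammaPDF 1 r = exponentialPDF r from rfl,
    ProbabilityTheory.lintegral_exponentialPDF_eq_antiDeriv hr, if_pos ht]


theorem second_hop_aux
    {Ω : Type*} [MeasurableSpace Ω] (Pr : Measure Ω) [IsProbabilityMeasure Pr]
    (lrd lrp P I x : ℝ)
    (hlrd : 0 < lrd) (hlrp : 0 < lrp) (hP : 0 < P) (hI : 0 < I) (hx : 0 < x)
    (H G : Ω → ℝ) (hH : Measurable H) (hG : Measurable G)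
    (hHd : Pr.map H = expMeasure lrd)
    (hGd : Pr.map G = expMeasure lrp)
    (hindep : IndepFun H G Pr) :
    (Pr {ω | min P (I / G ω) * H ω < x}).toReal =
      1 - Real.exp (-(lrd * x / P)) *
        (1 - ((lrd * x / (I * lrp)) / (1 + lrd * x / (I * lrp))) *
          Real.exp (-(lrp * I / P))) := by
  haveI h1 : IsProbabilityMeasure (expMeasure lrd) := isProbabilityMeasure_expMeasure hlrd
  haveI h2 : IsProbabilityMeasure (expMeasure lrp) := isProbabilityMeasure_expMeasure hlrp
  set s : ℝ := I / P with hs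
  have hs0 : 0 < s := div_pos hI hP
  set c : ℝ := lrd * x / I with hc
  have hc0 : 0 < c := div_pos (mul_pos hlrd hx) hI
  -- the joint law
  have hmap : Pr.map (fun ω => (G ω, H ω)) = (expMeasure lrp).prod (expMeasure lrd) := by
    have := (indepFun_iff_map_prod_eq_prod_map_map hG.aemeasurable hH.aemeasurable).1 hindep.symm
    rw [this, hGd, hHd]
  set S : Set (ℝ × ℝ) := {p : ℝ × ℝ | min P (I / p.1) * p.2 < x} with hSdef
  have hSm : MeasurableSet S := by
    apply measurableSet_lt _ measurable_const
    exact (measurable_const.min (measurable_const.div measurable_fst)).mul measurable_snd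
  have step1 : Pr {ω | min P (I / G ω) * H ω < x}
      = ∫⁻ g, expMeasure lrd {h | min P (I / g) * h < x} ∂(expMeasure lrp) := by
    have : {ω | min P (I / G ω) * H ω < x} = (fun ω => (G ω, H ω)) ⁻¹' S := rfl
    rw [this, ← Measure.map_apply (hG.prodMk hH) hSm, hmap, Measure.prod_apply hSm]
    rfl
  -- explicit inner value
  set F : ℝ → ENNReal := fun g => if g ≤ s then ENNReal.ofReal (1 - Real.exp (-(lrd * (x / P))))
      else ENNReal.ofReal (1 - Real.exp (-(lrd * (x * g / I)))) with hF
  have hae : ∀ᵐ g ∂(expMeasure lrp), (fun g => expMeasure lrd {h | min P (I / g) * h < x}) g = F g := by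
    have hnull : expMeasure lrp (Iic 0) = 0 := by
      rw [expMeasure_Iic1 hlrp le_rfl]
      simp
    rw [ae_iff]
    refine measure_mono_null (fun g hg => ?_) hnull
    simp only [mem_setOf_eq] at hg
    by_contra hgpos
    simp only [mem_Iic, not_le] at hgpos
    apply hg
    have hIg : 0 < I / g := div_pos hI hgpos
    have hmin : 0 < min P (I / g) := lt_min hP hIg
    have hset : {h : ℝ | min P (I / g) * h < x} = Iio (x / min P (I / g)) := by
      ext h; simp [lt_div_iff₀ hmin, mul_comm]
    rw [hset, expMeasure_Iio1 hlrd (le_of_lt (div_pos hx hmin))]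
    by_cases hgs : g ≤ s
    · have : I / g ≥ P := (le_div_iff₀ hgpos).2 (by
        rw [hs] at hgs
        calc P * g ≤ P * (I / P) := by nlinarith
        _ = I := by field_simp)
      rw [min_eq_left this, hF]
      simp only [if_pos hgs]
    · have hlt : I / g < P := by
        rw [div_lt_iff₀ hgpos]
        push_neg at hgs
        rw [hs] at hgs
        calc I = P * (I / P) := by field_simp
        _ < P * g := by nlinarith
      rw [min_eq_right hlt.le, hF]
      simp only [if_neg hgs]
      rw [div_div_eq_mul_div]
  have step2 : ∫⁻ g, expMeasure lrd {h | min P (I / g) * h < x} ∂(expMeasure lrp)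
      = ∫⁻ g, F g ∂(expMeasure lrp) := lintegral_congr_ae hae
  have hFm : Measurable F := by
    apply Measurable.ite measurableSet_Iic measurable_const
    apply Measurable.ennreal_ofReal
    fun_prop
  -- piece A
  have hA : ∫⁻ g in Iic s, F g ∂(expMeasure lrp)
      = ENNReal.ofReal (1 - rexp (-(lrd * (x / P)))) * ENNReal.ofReal (1 - rexp (-(lrp * s))) := by
    rw [setLIntegral_congr_fun (f := F) measurableSet_Iic
      (fun g (hg : g ∈ Iic s) => (if_pos (show g ≤ s from hg) : F g = _))]
    rw [setLIntegral_const, expMeasure_Iic1 hlrp hs0.le]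
  -- piece B
  have hexpand : ∀ g : ℝ, lrp * rexp (-(lrp * g)) * (1 - rexp (-(c * g)))
      = lrp * rexp (-(lrp * g)) - lrp * rexp (-((lrp + c) * g)) := by
    intro g
    have h : rexp (-(lrp * g)) * rexp (-(c * g)) = rexp (-((lrp + c) * g)) := by
      rw [← Real.exp_add]; congr 1; ring
    rw [mul_one_sub, mul_assoc, h]
  have hint1 : IntegrableOn (fun g => lrp * rexp (-(lrp * g))) (Ioi s) := by
    have := (exp_neg_integrableOn_Ioi s hlrp).const_mul lrp
    simpa only [neg_mul, IntegrableOn] using this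
  have hint2 : IntegrableOn (fun g => lrp * rexp (-((lrp + c) * g))) (Ioi s) := by
    have := (exp_neg_integrableOn_Ioi s (by positivity : (0:ℝ) < lrp + c)).const_mul lrp
    simpa only [neg_mul, IntegrableOn] using this
  have hintB : IntegrableOn (fun g => lrp * rexp (-(lrp * g)) * (1 - rexp (-(c * g)))) (Ioi s) := by
    apply (hint1.sub hint2).congr
    filter_upwards with g
    simp only [Pi.sub_apply]
    exact (hexpand g).symm
  have hB : ∫⁻ g in Ioi s, F g ∂(expMeasure lrp)
      = ENNReal.ofReal (rexp (-(lrp * s)) - lrp / (lrp + c) * rexp (-((lrp + c) * s))) := by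
    have hpdfm : Measurable (gammaPDF 1 lrp) := (measurable_gammaPDFReal 1 lrp).ennreal_ofReal
    rw [expMeasure, gammaMeasure, restrict_withDensity measurableSet_Ioi,
      lintegral_withDensity_eq_lintegral_mul _ hpdfm hFm]
    have hcong : ∫⁻ g in Ioi s, (gammaPDF 1 lrp * F) g ∂volume
        = ∫⁻ g in Ioi s, ENNReal.ofReal (lrp * rexp (-(lrp * g)) * (1 - rexp (-(c * g)))) ∂volume := by
      apply setLIntegral_congr_fun measurableSet_Ioi
      refine fun g (hg : s < g) => ?_
      have hg0 : 0 < g := hs0.trans hg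
      have hpdf : gammaPDF 1 lrp g = ENNReal.ofReal (lrp * rexp (-(lrp * g))) := by
        rw [show gammaPDF 1 lrp = exponentialPDF lrp from rfl,
          exponentialPDF_of_nonneg hg0.le]
      simp only [Pi.mul_apply, hpdf, hF]
      rw [if_neg (not_le.2 hg), ← ENNReal.ofReal_mul (by positivity)]
      congr 2
      rw [hc]
      field_simp
    rw [hcong, ← MeasureTheory.ofReal_integral_eq_lintegral_ofReal hintB]
    · congr 1
      rw [MeasureTheory.setIntegral_congr_fun measurableSet_Ioi (fun g _ => hexpand g),
        integral_sub hint1 hint2, MeasureTheory.integral_const_mul,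
        MeasureTheory.integral_const_mul, integral_exp_neg_mul_Ioi1 hlrp,
        integral_exp_neg_mul_Ioi1 (by positivity : (0:ℝ) < lrp + c)]
      field_simp
    · filter_upwards [ae_restrict_mem measurableSet_Ioi] with g hg
      have hg0 : 0 < g := hs0.trans hg
      have h1 : rexp (-(c * g)) ≤ 1 := Real.exp_le_one_iff.2 (by nlinarith)
      have h2 := (Real.exp_pos (-(lrp * g))).le
      simp only [Pi.zero_apply]
      exact mul_nonneg (mul_nonneg hlrp.le h2) (by linarith)
  -- combine
  have hsplit : ∫⁻ g, F g ∂(expMeasure lrp)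
      = (∫⁻ g in Iic s, F g ∂(expMeasure lrp)) + ∫⁻ g in Ioi s, F g ∂(expMeasure lrp) := by
    rw [← lintegral_add_compl F measurableSet_Iic, compl_Iic]
  rw [step1, step2, hsplit, hA, hB]
  -- nonnegativity facts
  have hu1 : rexp (-(lrd * (x / P))) ≤ 1 := Real.exp_le_one_iff.2 (neg_nonpos_of_nonneg (by positivity))
  have hv1 : rexp (-(lrp * s)) ≤ 1 := Real.exp_le_one_iff.2 (neg_nonpos_of_nonneg (by positivity))
  have hBnn : 0 ≤ rexp (-(lrp * s)) - lrp / (lrp + c) * rexp (-((lrp + c) * s)) := by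
    have h1 : rexp (-((lrp + c) * s)) ≤ rexp (-(lrp * s)) := Real.exp_le_exp.2 (by nlinarith)
    have h2 : lrp / (lrp + c) ≤ 1 := (div_le_one (by positivity)).2 (by linarith)
    have h3 : (0:ℝ) ≤ lrp / (lrp + c) := by positivity
    nlinarith [(Real.exp_pos (-((lrp + c) * s))).le]
  rw [← ENNReal.ofReal_mul (by linarith), ← ENNReal.ofReal_add (by nlinarith) hBnn,
    ENNReal.toReal_ofReal (by nlinarith)]
  -- final real identity
  have e1eq : lrd * (x / P) = lrd * x / P := by ring
  have e2eq : lrp * s = lrp * I / P := by rw [hs]; ring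
  have e3 : (lrp + c) * s = lrp * I / P + lrd * x / P := by
    rw [hs, hc]; field_simp
  rw [e1eq, e2eq, e3, neg_add, Real.exp_add, hc]
  have hd1 : (0:ℝ) < I * lrp := by positivity
  have hd2 : (0:ℝ) < 1 + lrd * x / (I * lrp) := by positivity
  have hd3 : (0:ℝ) < lrp + lrd * x / I := by positivity
  field_simp
  ring

end SecondHopHelpers

/-- Conditional CDF of the per-antenna second-hop SNR numerator: for independent
`H ~ Exp(lrd)` and `G ~ Exp(lrp)` and constants `P, I, x > 0`,
`P[min(P, I/G)·H < x] = 1 − e^{−lrd·x/P}(1 − ((lrd·x/(I·lrp))/(1 + lrd·x/(I·lrp)))·e^{−lrp·I/P})`. -/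
theorem second_hop_conditional_cdf
    {Ω : Type*} [MeasurableSpace Ω] (Pr : Measure Ω) [IsProbabilityMeasure Pr]
    (lrd lrp P I x : ℝ)
    (hlrd : 0 < lrd) (hlrp : 0 < lrp) (hP : 0 < P) (hI : 0 < I) (hx : 0 < x)
    (H G : Ω → ℝ) (hH : Measurable H) (hG : Measurable G)
    (hHd : Pr.map H = expMeasure lrd)
    (hGd : Pr.map G = expMeasure lrp)
    (hindep : IndepFun H G Pr) :
    (Pr {ω | min P (I / G ω) * H ω < x}).toReal =
      1 - Real.exp (-(lrd * x / P)) *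
        (1 - ((lrd * x / (I * lrp)) / (1 + lrd * x / (I * lrp))) *
          Real.exp (-(lrp * I / P))) := by
  exact second_hop_aux Pr lrd lrp P I x hlrd hlrp hP hI hx H G hH hG hHd hGd hindep
end

section
/- Let L ≥ 1 be an integer and λ, μ, a > 0. If W ~ Gamma(shape L, rate λ) and Y ~ Exp(μ) are independent, then E[ e^{−a·Y/W} ] = L · e^{aλ/μ} · E_{L+1}(aλ/μ), where E_n(z) = ∫₁^∞ e^{−z s} s^{−n} ds. Equivalently, ∫₀^∞ ∫₀^∞ e^{−ay/w} · (λ^L w^{L−1} e^{−λw}/(L−1)!) · (μ e^{−μy}) dy dw = L e^{aλ/μ} E_{L+1}(aλ/μ). -/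
open MeasureTheory ProbabilityTheory Real

/-- The generalized exponential integral `E_n(z) = ∫₁^∞ e^{−z s} s^{−n} ds`. -/
noncomputable def genExpInt (n : ℕ) (z : ℝ) : ℝ :=
  ∫ s in Set.Ioi (1 : ℝ), Real.exp (-(z * s)) / s ^ n

section Aux

open Set
open scoped ENNReal NNReal


lemma aux_integrableOn_pow_mul_exp (n : ℕ) {c : ℝ} (hc : 0 < c) :
    IntegrableOn (fun w : ℝ => w ^ n * Real.exp (-(c * w))) (Set.Ioi 0) := by
  have h := integrableOn_rpow_mul_exp_neg_mul_rpow (s := (n : ℝ)) (p := 1)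
    (by exact lt_of_lt_of_le neg_one_lt_zero (Nat.cast_nonneg n)) zero_lt_one hc
  refine h.congr_fun (fun x hx => ?_) measurableSet_Ioi
  beta_reduce
  rw [Real.rpow_one, Real.rpow_natCast, neg_mul]

lemma aux_integral_pow_mul_exp (n : ℕ) {c : ℝ} (hc : 0 < c) :
    ∫ w in Set.Ioi (0:ℝ), w ^ n * Real.exp (-(c * w)) = (Nat.factorial n) / c ^ (n + 1) := by
  have h := integral_rpow_mul_exp_neg_mul_Ioi (a := (n : ℝ) + 1) (by positivity) hc
  rw [add_sub_cancel_right] at h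
  have h2 : ∫ w in Set.Ioi (0:ℝ), w ^ n * Real.exp (-(c * w))
      = ∫ t in Set.Ioi (0:ℝ), t ^ (n : ℝ) * Real.exp (-(c * t)) := by
    refine setIntegral_congr_fun measurableSet_Ioi (fun x hx => ?_)
    rw [Real.rpow_natCast]
  have h3 : Real.Gamma (((n + 1 : ℕ)) : ℝ) = Nat.factorial n := by
    rw [Nat.cast_add, Nat.cast_one, Real.Gamma_nat_eq_factorial]
  rw [h2, h, show ((n : ℝ) + 1) = ((n + 1 : ℕ) : ℝ) by push_cast; ring,
    Real.rpow_natCast, h3, div_pow, one_pow]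
  ring

lemma aux_comp_add_Ioi (g : ℝ → ℝ) (d : ℝ) :
    ∫ x in Set.Ioi (0:ℝ), g (d + x) = ∫ x in Set.Ioi d, g x := by
  rw [← integral_indicator measurableSet_Ioi, ← integral_indicator measurableSet_Ioi,
    ← integral_add_left_eq_self (fun x => (Set.Ioi d).indicator g x) d]
  congr 1
  ext x
  simp [Set.indicator_apply, Set.mem_Ioi, lt_add_iff_pos_right]


private lemma part2 (M : ℕ) (lam mu a : ℝ) (hlam : 0 < lam) (hmu : 0 < mu) (ha : 0 < a) :
    (∫ w in Set.Ioi (0 : ℝ), ∫ y in Set.Ioi (0 : ℝ),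
        Real.exp (-(a * y) / w) *
          (lam ^ (M + 1) * w ^ M * Real.exp (-(lam * w)) / (Nat.factorial M)) *
          (mu * Real.exp (-(mu * y)))) =
      ((M : ℝ) + 1) * Real.exp (a * lam / mu) * genExpInt (M + 2) (a * lam / mu) := by
  set H : ℝ → ℝ → ℝ := fun w u =>
    (mu * Real.exp (-(a * u)) * (lam ^ (M + 1) / (Nat.factorial M : ℝ))) *
      (w ^ (M + 1) * Real.exp (-((mu * u + lam) * w))) with hHdef
  set J : ℝ := ∫ u in Set.Ioi (0:ℝ),
      Real.exp (-(a * u)) * ((mu * u + lam) ^ (M + 2))⁻¹ with hJdef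
  -- Step 1 : inner substitution y = w * u
  have step1 : ∀ w ∈ Set.Ioi (0:ℝ),
      (∫ y in Set.Ioi (0:ℝ), Real.exp (-(a * y) / w) *
          (lam ^ (M + 1) * w ^ M * Real.exp (-(lam * w)) / (Nat.factorial M)) *
          (mu * Real.exp (-(mu * y))))
      = ∫ u in Set.Ioi (0:ℝ), H w u := by
    intro w hw
    have hw0 : (0:ℝ) < w := hw
    have key : ∀ F : ℝ → ℝ, (∫ y in Set.Ioi (0:ℝ), F y)
        = w * ∫ x in Set.Ioi (0:ℝ), F (w * x) := by
      intro F
      rw [integral_comp_mul_left_Ioi F 0 hw0, mul_zero, smul_eq_mul, ← mul_assoc,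
        mul_inv_cancel₀ hw0.ne', one_mul]
    rw [key (fun y => Real.exp (-(a * y) / w) *
          (lam ^ (M + 1) * w ^ M * Real.exp (-(lam * w)) / (Nat.factorial M)) *
          (mu * Real.exp (-(mu * y)))), ← integral_const_mul]
    refine setIntegral_congr_fun measurableSet_Ioi (fun u hu => ?_)
    have e1 : -(a * (w * u)) / w = -(a * u) := by field_simp
    have e2 : Real.exp (-((mu * u + lam) * w))
        = Real.exp (-(lam * w)) * Real.exp (-(mu * (w * u))) := by
      rw [← Real.exp_add]; ring_nf
    simp only [hHdef, e1, e2]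
    ring
  -- Step 2 : integrability on the product
  have hmeas : AEStronglyMeasurable (Function.uncurry H)
      ((volume.restrict (Set.Ioi 0)).prod (volume.restrict (Set.Ioi 0))) := by
    apply Measurable.aestronglyMeasurable
    unfold Function.uncurry
    fun_prop
  have hbound : Integrable (fun p : ℝ × ℝ =>
      ((mu * (lam ^ (M + 1) / (Nat.factorial M : ℝ))) *
        (p.1 ^ (M + 1) * Real.exp (-(lam * p.1)))) * Real.exp (-a * p.2))
      ((volume.restrict (Set.Ioi 0)).prod (volume.restrict (Set.Ioi 0))) :=
    Integrable.mul_prod ((aux_integrableOn_pow_mul_exp (M + 1) hlam).const_mul _)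
      (exp_neg_integrableOn_Ioi 0 ha)
  have hH : Integrable (Function.uncurry H)
      ((volume.restrict (Set.Ioi 0)).prod (volume.restrict (Set.Ioi 0))) := by
    refine hbound.mono' hmeas ?_
    rw [Measure.prod_restrict]
    refine (ae_restrict_iff' (measurableSet_Ioi.prod measurableSet_Ioi)).mpr
      (Filter.Eventually.of_forall ?_)
    rintro ⟨w, u⟩ ⟨hw, hu⟩
    simp only [Function.uncurry, Real.norm_eq_abs, hHdef]
    have hw0 : (0:ℝ) < w := hw
    have hu0 : (0:ℝ) < u := hu
    rw [abs_of_nonneg (by positivity)]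
    have key : Real.exp (-((mu * u + lam) * w)) ≤ Real.exp (-(lam * w)) := by
      apply Real.exp_le_exp.mpr
      nlinarith [mul_pos (mul_pos hmu hu0) hw0]
    calc (mu * Real.exp (-(a * u)) * (lam ^ (M + 1) / (Nat.factorial M : ℝ))) *
          (w ^ (M + 1) * Real.exp (-((mu * u + lam) * w)))
        = ((mu * Real.exp (-(a * u)) * (lam ^ (M + 1) / (Nat.factorial M : ℝ))) * w ^ (M + 1)) *
            Real.exp (-((mu * u + lam) * w)) := by ring
      _ ≤ ((mu * Real.exp (-(a * u)) * (lam ^ (M + 1) / (Nat.factorial M : ℝ))) * w ^ (M + 1)) *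
            Real.exp (-(lam * w)) := by
          exact mul_le_mul_of_nonneg_left key (by positivity)
      _ = ((mu * (lam ^ (M + 1) / (Nat.factorial M : ℝ))) *
            (w ^ (M + 1) * Real.exp (-(lam * w)))) * Real.exp (-a * u) := by
          rw [neg_mul]; ring
  -- Step 4 : inner w-integral
  have step4 : ∀ u ∈ Set.Ioi (0:ℝ), (∫ w in Set.Ioi (0:ℝ), H w u)
      = (((M : ℝ) + 1) * mu * lam ^ (M + 1)) *
          (Real.exp (-(a * u)) * ((mu * u + lam) ^ (M + 2))⁻¹) := by
    intro u hu
    have hu0 : (0:ℝ) < u := hu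
    have hcpos : 0 < mu * u + lam := add_pos (mul_pos hmu hu0) hlam
    have h1 : (∫ w in Set.Ioi (0:ℝ), H w u)
        = (mu * Real.exp (-(a * u)) * (lam ^ (M + 1) / (Nat.factorial M : ℝ))) *
            ∫ w in Set.Ioi (0:ℝ), w ^ (M + 1) * Real.exp (-((mu * u + lam) * w)) := by
      simp only [hHdef]
      exact integral_const_mul _ _
    rw [h1, aux_integral_pow_mul_exp (M + 1) hcpos]
    have hfact : ((Nat.factorial (M + 1) : ℝ)) = ((M : ℝ) + 1) * (Nat.factorial M : ℝ) := by
      rw [Nat.factorial_succ]; push_cast; ring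
    rw [hfact]
    have hfM : (Nat.factorial M : ℝ) ≠ 0 := Nat.cast_ne_zero.mpr (Nat.factorial_ne_zero M)
    field_simp
  -- Step 5 : combine via Fubini
  have step5 : (∫ w in Set.Ioi (0 : ℝ), ∫ y in Set.Ioi (0 : ℝ),
        Real.exp (-(a * y) / w) *
          (lam ^ (M + 1) * w ^ M * Real.exp (-(lam * w)) / (Nat.factorial M)) *
          (mu * Real.exp (-(mu * y))))
      = (((M : ℝ) + 1) * mu * lam ^ (M + 1)) * J := by
    calc (∫ w in Set.Ioi (0 : ℝ), ∫ y in Set.Ioi (0 : ℝ),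
          Real.exp (-(a * y) / w) *
            (lam ^ (M + 1) * w ^ M * Real.exp (-(lam * w)) / (Nat.factorial M)) *
            (mu * Real.exp (-(mu * y))))
        = ∫ w in Set.Ioi (0:ℝ), ∫ u in Set.Ioi (0:ℝ), H w u :=
          setIntegral_congr_fun measurableSet_Ioi step1
      _ = ∫ u in Set.Ioi (0:ℝ), ∫ w in Set.Ioi (0:ℝ), H w u := integral_integral_swap hH
      _ = ∫ u in Set.Ioi (0:ℝ), (((M : ℝ) + 1) * mu * lam ^ (M + 1)) *
            (Real.exp (-(a * u)) * ((mu * u + lam) ^ (M + 2))⁻¹) :=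
          setIntegral_congr_fun measurableSet_Ioi step4
      _ = (((M : ℝ) + 1) * mu * lam ^ (M + 1)) * J := by
          rw [hJdef]; exact integral_const_mul _ _
  -- Step 6 : the generalized exponential integral in terms of J
  have step6 : genExpInt (M + 2) (a * lam / mu)
      = mu * lam ^ (M + 1) * Real.exp (-(a * lam / mu)) * J := by
    have hml : 0 < mu / lam := div_pos hmu hlam
    unfold genExpInt
    rw [← aux_comp_add_Ioi (fun s => Real.exp (-((a * lam / mu) * s)) / s ^ (M + 2)) 1]
    have hc := integral_comp_mul_left_Ioi
      (fun t => Real.exp (-((a * lam / mu) * (1 + t))) / (1 + t) ^ (M + 2)) 0 hml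
    rw [mul_zero, smul_eq_mul] at hc
    have h7 : (∫ t in Set.Ioi (0:ℝ),
          Real.exp (-((a * lam / mu) * (1 + t))) / (1 + t) ^ (M + 2))
        = (mu / lam) * ∫ x in Set.Ioi (0:ℝ),
            Real.exp (-((a * lam / mu) * (1 + mu / lam * x))) / (1 + mu / lam * x) ^ (M + 2) := by
      rw [hc, ← mul_assoc, mul_inv_cancel₀ (ne_of_gt hml), one_mul]
    rw [h7]
    have hpt : ∀ x ∈ Set.Ioi (0:ℝ),
        Real.exp (-((a * lam / mu) * (1 + mu / lam * x))) / (1 + mu / lam * x) ^ (M + 2)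
        = (Real.exp (-(a * lam / mu)) * lam ^ (M + 2)) *
            (Real.exp (-(a * x)) * ((mu * x + lam) ^ (M + 2))⁻¹) := by
      intro x hx
      have hx0 : (0:ℝ) < x := hx
      have hden : 1 + mu / lam * x = (mu * x + lam) / lam := by field_simp; ring
      have hexp : -((a * lam / mu) * (1 + mu / lam * x)) = -(a * lam / mu) + -(a * x) := by
        field_simp; ring
      have hdpos : (0:ℝ) < mu * x + lam := add_pos (mul_pos hmu hx0) hlam
      rw [hexp, Real.exp_add, hden, div_pow]
      field_simp
    rw [setIntegral_congr_fun measurableSet_Ioi hpt, integral_const_mul, ← hJdef]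
    field_simp
    ring
  rw [step5, step6]
  have hexp1 : Real.exp (a * lam / mu) * Real.exp (-(a * lam / mu)) = 1 := by
    rw [← Real.exp_add, add_neg_cancel, Real.exp_zero]
  calc (((M : ℝ) + 1) * mu * lam ^ (M + 1)) * J
      = (Real.exp (a * lam / mu) * Real.exp (-(a * lam / mu))) *
          ((((M : ℝ) + 1) * mu * lam ^ (M + 1)) * J) := by rw [hexp1, one_mul]
    _ = ((M : ℝ) + 1) * Real.exp (a * lam / mu) *
          (mu * lam ^ (M + 1) * Real.exp (-(a * lam / mu)) * J) := by ring


private lemma part1 {Ω : Type*} [MeasurableSpace Ω] (Pr : Measure Ω) [IsProbabilityMeasure Pr]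
    (M : ℕ) (lam mu a : ℝ) (hlam : 0 < lam) (hmu : 0 < mu) (ha : 0 < a)
    (W Y : Ω → ℝ) (hW : Measurable W) (hY : Measurable Y)
    (hWd : Pr.map W = gammaMeasure ((M + 1 : ℕ) : ℝ) lam)
    (hYd : Pr.map Y = expMeasure mu)
    (hindep : IndepFun W Y Pr) :
    ∫ ω, Real.exp (-(a * Y ω) / W ω) ∂Pr =
      ∫ w in Set.Ioi (0 : ℝ), ∫ y in Set.Ioi (0 : ℝ),
        Real.exp (-(a * y) / w) *
          (lam ^ (M + 1) * w ^ M * Real.exp (-(lam * w)) / (Nat.factorial M)) *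
          (mu * Real.exp (-(mu * y))) := by
  haveI : IsProbabilityMeasure (gammaMeasure ((M + 1 : ℕ) : ℝ) lam) := isProbabilityMeasure_gammaMeasure (by positivity) hlam
  haveI : IsProbabilityMeasure (expMeasure mu) := isProbabilityMeasure_expMeasure hmu
  have hmap : Pr.map (fun ω => (W ω, Y ω)) = (gammaMeasure ((M + 1 : ℕ) : ℝ) lam).prod (expMeasure mu) := by
    rw [← hWd, ← hYd]
    exact (ProbabilityTheory.indepFun_iff_map_prod_eq_prod_map_map
      hW.aemeasurable hY.aemeasurable).mp hindep
  have hFmeas : Measurable (fun p : ℝ × ℝ => Real.exp (-(a * p.2) / p.1)) := by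
    fun_prop
  have h0 : ∫ ω, Real.exp (-(a * Y ω) / W ω) ∂Pr
      = ∫ p : ℝ × ℝ, Real.exp (-(a * p.2) / p.1) ∂((gammaMeasure ((M + 1 : ℕ) : ℝ) lam).prod (expMeasure mu)) := by
    rw [← hmap, integral_map (hW.aemeasurable.prodMk hY.aemeasurable)
      hFmeas.aestronglyMeasurable]
  have hIio : ∀ aa rr : ℝ, gammaMeasure aa rr (Set.Iio 0) = 0 := by
    intro aa rr
    rw [gammaMeasure, withDensity_apply _ measurableSet_Iio,
      lintegral_gammaPDF_of_nonpos le_rfl]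
  have hIio2 : expMeasure mu (Set.Iio 0) = 0 := by
    rw [expMeasure]; exact hIio _ _
  have haeprod : ∀ᵐ p : ℝ × ℝ ∂((gammaMeasure ((M + 1 : ℕ) : ℝ) lam).prod (expMeasure mu)), 0 ≤ p.1 ∧ 0 ≤ p.2 := by
    rw [ae_iff]
    have hsub : {p : ℝ × ℝ | ¬(0 ≤ p.1 ∧ 0 ≤ p.2)}
        ⊆ (Set.Iio 0 ×ˢ Set.univ) ∪ (Set.univ ×ˢ Set.Iio 0) := by
      intro p hp
      simp only [Set.mem_setOf_eq, not_and_or, not_le] at hp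
      simp only [Set.mem_union, Set.mem_prod, Set.mem_univ, Set.mem_Iio, and_true, true_and]
      tauto
    refine measure_mono_null hsub (measure_union_null ?_ ?_)
    · rw [Measure.prod_prod, hIio, zero_mul]
    · rw [Measure.prod_prod, hIio2, mul_zero]
  have hFint : Integrable (fun p : ℝ × ℝ => Real.exp (-(a * p.2) / p.1)) ((gammaMeasure ((M + 1 : ℕ) : ℝ) lam).prod (expMeasure mu)) := by
    refine (integrable_const (1 : ℝ)).mono' hFmeas.aestronglyMeasurable ?_
    filter_upwards [haeprod] with p hp
    rw [Real.norm_eq_abs, Real.abs_exp]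
    apply Real.exp_le_one_iff.mpr
    apply div_nonpos_of_nonpos_of_nonneg (neg_nonpos.mpr (mul_nonneg ha.le hp.2)) hp.1
  have h1 : ∫ p : ℝ × ℝ, Real.exp (-(a * p.2) / p.1) ∂((gammaMeasure ((M + 1 : ℕ) : ℝ) lam).prod (expMeasure mu))
      = ∫ w, (∫ y, Real.exp (-(a * y) / w) ∂(expMeasure mu)) ∂(gammaMeasure ((M + 1 : ℕ) : ℝ) lam) :=
    integral_prod _ hFint
  have hzero : ∀ᵐ y : ℝ, y ≠ (0 : ℝ) := by
    rw [ae_iff]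
    simpa using Real.volume_singleton (a := (0 : ℝ))
  have hpdfY : ∀ y : ℝ, 0 ≤ y → gammaPDFReal 1 mu y = mu * Real.exp (-(mu * y)) := by
    intro y hy
    unfold gammaPDFReal
    rw [if_pos hy, sub_self, Real.rpow_zero, Real.rpow_one, Real.Gamma_one]
    ring
  have hpdfW : ∀ w : ℝ, 0 < w → gammaPDFReal ((M + 1 : ℕ) : ℝ) lam w
      = lam ^ (M + 1) * w ^ M * Real.exp (-(lam * w)) / (Nat.factorial M) := by
    intro w hw
    unfold gammaPDFReal
    rw [if_pos hw.le,
      show (((M + 1 : ℕ) : ℝ) - 1) = ((M : ℕ) : ℝ) by push_cast; ring,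
      Real.rpow_natCast, Real.rpow_natCast,
      show Real.Gamma (((M + 1 : ℕ)) : ℝ) = Nat.factorial M by
        rw [Nat.cast_add, Nat.cast_one, Real.Gamma_nat_eq_factorial]]
    ring
  -- the inner integral rewritten as an integral against the exponential density
  have hinner : ∀ w : ℝ, (∫ y, Real.exp (-(a * y) / w) ∂(expMeasure mu))
      = ∫ y in Set.Ioi (0 : ℝ), Real.exp (-(a * y) / w) * (mu * Real.exp (-(mu * y))) := by
    intro w
    have hrw : expMeasure mu = volume.withDensity
        (fun y => ((gammaPDFReal 1 mu y).toNNReal : ℝ≥0∞)) := rfl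
    rw [hrw, integral_withDensity_eq_integral_smul (measurable_gammaPDFReal 1 mu).real_toNNReal]
    rw [← setIntegral_eq_integral_of_ae_compl_eq_zero (s := Set.Ioi (0:ℝ)) ?_]
    · refine setIntegral_congr_fun measurableSet_Ioi (fun y hy => ?_)
      have hy0 : (0:ℝ) < y := hy
      rw [NNReal.smul_def, Real.coe_toNNReal _ (gammaPDFReal_nonneg one_pos hmu y), hpdfY y hy0.le, smul_eq_mul]
      ring
    · filter_upwards [hzero] with y hy hymem
      have hylt : y < 0 := by
        rcases lt_or_ge y 0 with h | h
        · exact h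
        · exact absurd (lt_of_le_of_ne h (Ne.symm hy)) hymem
      rw [NNReal.smul_def]
      have : gammaPDFReal 1 mu y = 0 := by
        unfold gammaPDFReal; rw [if_neg (not_le.mpr hylt)]
      rw [this]
      simp
  have houter : ∫ w, (∫ y, Real.exp (-(a * y) / w) ∂(expMeasure mu)) ∂(gammaMeasure ((M + 1 : ℕ) : ℝ) lam)
      = ∫ w in Set.Ioi (0 : ℝ),
          (gammaPDFReal ((M + 1 : ℕ) : ℝ) lam w) *
            ∫ y in Set.Ioi (0 : ℝ), Real.exp (-(a * y) / w) * (mu * Real.exp (-(mu * y))) := by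
    have hrw : gammaMeasure ((M + 1 : ℕ) : ℝ) lam = volume.withDensity
        (fun w => ((gammaPDFReal ((M + 1 : ℕ) : ℝ) lam w).toNNReal : ℝ≥0∞)) := rfl
    rw [hrw, integral_withDensity_eq_integral_smul
      (measurable_gammaPDFReal _ lam).real_toNNReal]
    rw [← setIntegral_eq_integral_of_ae_compl_eq_zero (s := Set.Ioi (0:ℝ)) ?_]
    · refine setIntegral_congr_fun measurableSet_Ioi (fun w hw => ?_)
      rw [NNReal.smul_def, Real.coe_toNNReal _ (gammaPDFReal_nonneg (by positivity) hlam w), smul_eq_mul,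
        hinner w]
    · filter_upwards [hzero] with w hw hwmem
      have hwlt : w < 0 := by
        rcases lt_or_ge w 0 with h | h
        · exact h
        · exact absurd (lt_of_le_of_ne h (Ne.symm hw)) hwmem
      rw [NNReal.smul_def]
      have : gammaPDFReal ((M + 1 : ℕ) : ℝ) lam w = 0 := by
        unfold gammaPDFReal; rw [if_neg (not_le.mpr hwlt)]
      rw [this]
      simp
  rw [h0, h1, houter]
  refine setIntegral_congr_fun measurableSet_Ioi (fun w hw => ?_)
  have hw0 : (0:ℝ) < w := hw
  rw [hpdfW w hw0, ← integral_const_mul]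
  refine setIntegral_congr_fun measurableSet_Ioi (fun y hy => ?_)
  ring


end Aux

/-- For independent `W ~ Gamma(L, lam)` and `Y ~ Exp(mu)`,
`E[e^{−a·Y/W}] = L·e^{a·lam/mu}·E_{L+1}(a·lam/mu)`; equivalently, the corresponding
double integral against the two densities has the same value. -/
theorem gamma_exp_laplace_average
    {Ω : Type*} [MeasurableSpace Ω] (Pr : Measure Ω) [IsProbabilityMeasure Pr]
    (L : ℕ) (hL : 1 ≤ L) (lam mu a : ℝ) (hlam : 0 < lam) (hmu : 0 < mu) (ha : 0 < a)
    (W Y : Ω → ℝ) (hW : Measurable W) (hY : Measurable Y)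
    (hWd : Pr.map W = gammaMeasure L lam)
    (hYd : Pr.map Y = expMeasure mu)
    (hindep : IndepFun W Y Pr) :
    (∫ ω, Real.exp (-(a * Y ω) / W ω) ∂Pr =
      L * Real.exp (a * lam / mu) * genExpInt (L + 1) (a * lam / mu)) ∧
    (∫ w in Set.Ioi (0 : ℝ), ∫ y in Set.Ioi (0 : ℝ),
        Real.exp (-(a * y) / w) *
          (lam ^ L * w ^ (L - 1) * Real.exp (-(lam * w)) / (Nat.factorial (L - 1))) *
          (mu * Real.exp (-(mu * y))) =
      L * Real.exp (a * lam / mu) * genExpInt (L + 1) (a * lam / mu)) := by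
  obtain ⟨M, rfl⟩ : ∃ M : ℕ, L = M + 1 := ⟨L - 1, (Nat.succ_pred_eq_of_pos hL).symm⟩
  have h2 := part2 M lam mu a hlam hmu ha
  have h1 := part1 Pr M lam mu a hlam hmu ha W Y hW hY hWd hYd hindep
  constructor
  · rw [h1]
    rw [show M + 1 + 1 = M + 2 by omega]
    push_cast
    exact h2
  · simp only [Nat.add_sub_cancel]
    rw [show M + 1 + 1 = M + 2 by omega]
    push_cast
    exact h2
end

section
/- Let λ_sd, λ_sp, λ_sr, λ_rd, ψ, η > 0 and set A = λ_sp/(λ_sd ψ), K = 1/(1+A), B = η λ_sp/(ψ λ_rd λ_sr), C = η ψ λ_sr/(λ_rd λ_sp). Assume √(1+A)·ψ λ_sr/λ_sp < 1. Then the strictly convex function g(ρ) = K/(1+Bρ) + Cρ/(1−ρ) attains its unique global minimum on (0,1) at ρ*_ps = (1 − √(1+A)·ψ λ_sr/λ_sp)/(1 + √(1+A)·η/λ_rd); equivalently, the approximate PS-EH throughput (R_s/2)(1 − g(ρ)) is maximized over ρ ∈ (0,1) exactly at ρ*_ps. (This is the paper's Lemma 3, PS-EH case, for L = 1.) -/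
open Real Set

/-- Key algebraic inequality: if `x+y = xs+ys` with all positive, `K ys² = D xs²`,
and `x ≠ xs`, then `K/xs + D/ys < K/x + D/y`. -/
lemma ps_eh_key (K D x y xs ys : ℝ) (hx : 0 < x) (hy : 0 < y) (hxs : 0 < xs)
    (hys : 0 < ys) (hK : 0 < K) (hS : x + y = xs + ys)
    (heq : K * ys ^ 2 = D * xs ^ 2) (hne : x ≠ xs) :
    K / xs + D / ys < K / x + D / y := by
  have hD : D = K * ys ^ 2 / xs ^ 2 := by
    rw [eq_div_iff (pow_ne_zero 2 hxs.ne')]; linarith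
  subst hD
  have hy' : y = xs + ys - x := by linarith
  subst hy'
  have h2 : 0 < (x - xs) ^ 2 := by
    have := sub_ne_zero.mpr hne
    positivity
  have key2 : (K / x + (K * ys ^ 2 / xs ^ 2) / (xs + ys - x))
      - (K / xs + (K * ys ^ 2 / xs ^ 2) / ys)
      = K * ys * (xs + ys) * (x - xs) ^ 2 / (x * xs ^ 2 * (xs + ys - x) * ys) := by
    field_simp
    ring
  have hpos : 0 < K * ys * (xs + ys) * (x - xs) ^ 2 / (x * xs ^ 2 * (xs + ys - x) * ys) := by
    positivity
  linarith

/-- The strictly convex function `g(ρ) = K/(1+Bρ) + Cρ/(1−ρ)` attains its unique global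
minimum on `(0,1)` at `ρ*_ps = (1 − √(1+A)·ψλ_sr/λ_sp)/(1 + √(1+A)·η/λ_rd)`;
equivalently, the approximate PS-EH throughput is maximized exactly at `ρ*_ps`. -/
theorem ps_eh_optimal_power_splitting_fraction
    (lsd lsp lsr lrd ψ η : ℝ)
    (hlsd : 0 < lsd) (hlsp : 0 < lsp) (hlsr : 0 < lsr) (hlrd : 0 < lrd)
    (hψ : 0 < ψ) (hη : 0 < η)
    (A K B C ρstar : ℝ)
    (hA : A = lsp / (lsd * ψ))
    (hK : K = 1 / (1 + A))
    (hB : B = η * lsp / (ψ * lrd * lsr))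
    (hC : C = η * ψ * lsr / (lrd * lsp))
    (hsmall : Real.sqrt (1 + A) * ψ * lsr / lsp < 1)
    (hρ : ρstar = (1 - Real.sqrt (1 + A) * ψ * lsr / lsp) /
      (1 + Real.sqrt (1 + A) * η / lrd)) :
    ρstar ∈ Set.Ioo (0 : ℝ) 1 ∧
    ∀ ρ ∈ Set.Ioo (0 : ℝ) 1, ρ ≠ ρstar →
      K / (1 + B * ρstar) + C * ρstar / (1 - ρstar) <
        K / (1 + B * ρ) + C * ρ / (1 - ρ) := by
  have hA0 : 0 < A := by rw [hA]; positivity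
  have h1A : (0:ℝ) < 1 + A := by linarith
  set q := Real.sqrt (1 + A) with hq
  have hq0 : 0 < q := Real.sqrt_pos.mpr h1A
  have hq2 : q ^ 2 = 1 + A := Real.sq_sqrt h1A.le
  set s : ℝ := q * ψ * lsr / lsp with hs
  have hs0 : 0 < s := by positivity
  have hs1 : s < 1 := hsmall
  have hK0 : 0 < K := by rw [hK]; positivity
  have hB0 : 0 < B := by rw [hB]; positivity
  have hC0 : 0 < C := by rw [hC]; positivity
  have ht : B * s = q * η / lrd := by
    rw [hB, hs]; field_simp
  have hρ' : ρstar = (1 - s) / (1 + B * s) := by rw [hρ, ht]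
  have hden : 0 < 1 + B * s := by positivity
  have hρ0 : 0 < ρstar := by
    rw [hρ']; apply div_pos <;> linarith
  have hρ1 : ρstar < 1 := by
    rw [hρ', div_lt_one hden]
    nlinarith
  have hCB : C = K * B * s ^ 2 := by
    rw [hK, hB, hC, hs, ← hq2]
    field_simp
  -- 1 - ρ* = s * (1 + B ρ*)
  have h1ρ : 1 - ρstar = s * (1 + B * ρstar) := by
    rw [hρ']
    field_simp
    ring
  refine ⟨⟨hρ0, hρ1⟩, ?_⟩
  rintro ρ ⟨hρa, hρb⟩ hne
  have hxs : 0 < 1 + B * ρstar := by positivity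
  have hys : 0 < B * (1 - ρstar) := by
    have : 0 < 1 - ρstar := by linarith
    positivity
  have hx : 0 < 1 + B * ρ := by positivity
  have hy : 0 < B * (1 - ρ) := by
    have : 0 < 1 - ρ := by linarith
    positivity
  have heq : K * (B * (1 - ρstar)) ^ 2 = (C * B) * (1 + B * ρstar) ^ 2 := by
    rw [h1ρ, hCB]; ring
  have hxne : (1 + B * ρ) ≠ (1 + B * ρstar) := by
    intro h
    apply hne
    have : B * ρ = B * ρstar := by linarith
    exact mul_left_cancel₀ hB0.ne' this
  have hkey := ps_eh_key K (C * B) (1 + B * ρ) (B * (1 - ρ)) (1 + B * ρstar)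
    (B * (1 - ρstar)) hx hy hxs hys hK0 (by ring) heq hxne
  have e1 : C * ρstar / (1 - ρstar) = (C * B) / (B * (1 - ρstar)) - C := by
    have h1 : (0:ℝ) < 1 - ρstar := by linarith
    field_simp
    ring
  have e2 : C * ρ / (1 - ρ) = (C * B) / (B * (1 - ρ)) - C := by
    have h1 : (0:ℝ) < 1 - ρ := by linarith
    field_simp
    ring
  rw [e1, e2]
  linarith
end

section
/- Let K > 0 and D > 1. The function h : (0,1) → ℝ defined by h(ρ) = (1−ρ) − K·(1−ρ)²/(1 + (D−1)ρ) is strictly concave on (0,1). Consequently, the approximate TS-EH throughput τ̃_ts(ρ) = (R_s/2)·h(ρ) (R_s > 0) is a strictly concave function of the time-switching fraction ρ on (0,1). (This is the exact form, for L = 1, of the paper's concavity Lemma in the TS-EH case.) -/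
open Real Set

private lemma strictConcaveOn_congr' {s : Set ℝ} {f g : ℝ → ℝ}
    (hfg : ∀ x ∈ s, f x = g x) (h : StrictConcaveOn ℝ s g) :
    StrictConcaveOn ℝ s f := by
  refine ⟨h.1, fun x hx y hy hxy a b ha hb hab => ?_⟩
  have hmem : a • x + b • y ∈ s := h.1 hx hy ha.le hb.le hab
  rw [hfg x hx, hfg y hy, hfg _ hmem]
  exact h.2 hx hy hxy ha hb hab

private lemma aux_strict_concave (a b c e : ℝ) (hc : 0 < c) (he : 0 < e) :
    StrictConcaveOn ℝ (Set.Ioo (0 : ℝ) 1)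
      (fun x => a + b * x - c * (1 + e * x)⁻¹) := by
  set φ : ℝ → ℝ := fun x => a + b * x - c * (1 + e * x)⁻¹ with hφ
  set ψ : ℝ → ℝ := fun x => b + c * e * ((1 + e * x) ^ 2)⁻¹ with hψ
  have hpos : ∀ y ∈ Set.Ioo (0 : ℝ) 1, 0 < 1 + e * y := by
    intro y hy
    have := mul_pos he hy.1
    linarith
  have hder : ∀ y ∈ Set.Ioo (0 : ℝ) 1, HasDerivAt φ (ψ y) y := by
    intro y hy
    have hy0 : (1 + e * y) ≠ 0 := (hpos y hy).ne'
    have hu : HasDerivAt (fun x : ℝ => 1 + e * x) e y := by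
      simpa using ((hasDerivAt_id y).const_mul e).const_add 1
    have hinv : HasDerivAt (fun x : ℝ => (1 + e * x)⁻¹)
        (-((1 + e * y) ^ 2)⁻¹ * e) y := by
      simpa [Function.comp_def] using (hasDerivAt_inv hy0).comp y hu
    have : HasDerivAt φ (b + 0 - c * (-((1 + e * y) ^ 2)⁻¹ * e)) y := by
      have hb' : HasDerivAt (fun x : ℝ => a + b * x) (b + 0) y := by
        simpa using (((hasDerivAt_id y).const_mul b).const_add a)
      simpa [hφ, Pi.sub_def] using hb'.sub (hinv.const_mul c)
    convert this using 1
    simp [hψ]; ring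
  apply strictConcaveOn_of_deriv2_neg (convex_Ioo 0 1)
  · intro y hy
    exact (hder y hy).continuousAt.continuousWithinAt
  · intro x hx
    rw [interior_Ioo] at hx
    have hx0 : (1 + e * x) ≠ 0 := (hpos x hx).ne'
    have heq : deriv φ =ᶠ[nhds x] ψ := by
      filter_upwards [Ioo_mem_nhds hx.1 hx.2] with y hy
      exact (hder y hy).deriv
    have h2 : deriv (deriv φ) x = deriv ψ x := heq.deriv_eq
    have hψd : HasDerivAt ψ (c * e * (-(((1 + e * x) ^ 2) ^ 2)⁻¹ * (2 * (1 + e * x) * e))) x := by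
      have hu : HasDerivAt (fun y : ℝ => 1 + e * y) e x := by
        simpa using ((hasDerivAt_id x).const_mul e).const_add 1
      have hsq : HasDerivAt (fun y : ℝ => (1 + e * y) ^ 2) (2 * (1 + e * x) * e) x := by
        simpa [mul_comm, mul_assoc, Pi.pow_def] using (hu.pow 2)
      have hsq0 : ((1 + e * x) ^ 2) ≠ 0 := pow_ne_zero _ hx0
      have hinv2 : HasDerivAt (fun y : ℝ => ((1 + e * y) ^ 2)⁻¹)
          (-(((1 + e * x) ^ 2) ^ 2)⁻¹ * (2 * (1 + e * x) * e)) x := by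
        simpa [Function.comp_def] using (hasDerivAt_inv hsq0).comp x hsq
      simpa [hψ] using (hinv2.const_mul (c * e)).const_add b
    rw [Function.iterate_succ, Function.iterate_one, Function.comp_apply, h2, hψd.deriv]
    have h1 : 0 < 1 + e * x := hpos x hx
    have : 0 < c * e * (((1 + e * x) ^ 2) ^ 2)⁻¹ * (2 * (1 + e * x) * e) := by
      positivity
    nlinarith [this]

/-- `h(ρ) = (1−ρ) − K(1−ρ)²/(1+(D−1)ρ)` is strictly concave on `(0,1)`, hence the
approximate TS-EH throughput `(R_s/2)·h(ρ)` is strictly concave on `(0,1)`. -/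
theorem ts_eh_throughput_strictly_concave
    (K D : ℝ) (hK : 0 < K) (hD : 1 < D) :
    StrictConcaveOn ℝ (Set.Ioo (0 : ℝ) 1)
      (fun ρ => (1 - ρ) - K * (1 - ρ) ^ 2 / (1 + (D - 1) * ρ)) ∧
    ∀ Rs : ℝ, 0 < Rs → StrictConcaveOn ℝ (Set.Ioo (0 : ℝ) 1)
      (fun ρ => Rs / 2 * ((1 - ρ) - K * (1 - ρ) ^ 2 / (1 + (D - 1) * ρ))) := by
  have he : 0 < D - 1 := by linarith
  have hc : 0 < K * D ^ 2 / (D - 1) ^ 2 := by positivity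
  have key : StrictConcaveOn ℝ (Set.Ioo (0 : ℝ) 1)
      (fun ρ => (1 - ρ) - K * (1 - ρ) ^ 2 / (1 + (D - 1) * ρ)) := by
    apply strictConcaveOn_congr' (g := fun x =>
      (1 + 2 * K * D / (D - 1) ^ 2 - K / (D - 1) ^ 2) +
        (-1 - K / (D - 1)) * x - (K * D ^ 2 / (D - 1) ^ 2) * (1 + (D - 1) * x)⁻¹)
    · intro x hx
      have h1 : (0:ℝ) < 1 + (D - 1) * x := by nlinarith [hx.1, hx.2]
      have hne : (1 + (D - 1) * x) ≠ 0 := h1.ne'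
      have hd1 : (D - 1) ≠ 0 := he.ne'
      field_simp
      have hs : (1 - x + x * D) * (1 - x + x * D)⁻¹ = 1 := mul_inv_cancel₀ (by intro h0; apply hne; linarith)
      linear_combination (-K * (x * D - x - 2 * D + 1)) * hs
    · exact aux_strict_concave _ _ _ _ hc he
  refine ⟨key, fun Rs hRs => ?_⟩
  have hR2 : (0:ℝ) < Rs / 2 := by positivity
  refine ⟨key.1, fun x hx y hy hxy a b ha hb hab => ?_⟩
  have h := key.2 hx hy hxy ha hb hab
  simp only [smul_eq_mul] at h ⊢
  nlinarith [h]
end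

section
/- Let 0 < K < 1 and D > 1, and suppose D·√(K/(D−1+K)) > 1. Then the strictly concave function h(ρ) = (1−ρ) − K·(1−ρ)²/(1 + (D−1)ρ) attains its unique global maximum on (0,1) at ρ*_ts = (D·√(K/(D−1+K)) − 1)/(D−1), which is the unique solution in (0,1) of the stationarity equation K·(D² − u²) = (D−1)·u² with u = 1 + (D−1)ρ. (This gives the throughput-optimal time-switching fraction of the paper's Lemma 3, TS-EH case, for L = 1, in exact form for the approximate throughput.) -/
open Real Set

/-- The strictly concave function `h(ρ) = (1−ρ) − K(1−ρ)²/(1+(D−1)ρ)` attains its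
unique global maximum on `(0,1)` at `ρ*_ts = (D√(K/(D−1+K)) − 1)/(D−1)`, which is the
unique solution in `(0,1)` of `K(D² − u²) = (D−1)u²` with `u = 1 + (D−1)ρ`. -/
theorem ts_eh_optimal_time_switching_fraction
    (K D : ℝ) (hK0 : 0 < K) (hK1 : K < 1) (hD : 1 < D)
    (hcond : 1 < D * Real.sqrt (K / (D - 1 + K)))
    (ρstar : ℝ)
    (hρ : ρstar = (D * Real.sqrt (K / (D - 1 + K)) - 1) / (D - 1)) :
    ρstar ∈ Set.Ioo (0 : ℝ) 1 ∧
    (∀ ρ ∈ Set.Ioo (0 : ℝ) 1, ρ ≠ ρstar →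
      (1 - ρ) - K * (1 - ρ) ^ 2 / (1 + (D - 1) * ρ) <
        (1 - ρstar) - K * (1 - ρstar) ^ 2 / (1 + (D - 1) * ρstar)) ∧
    (∀ ρ ∈ Set.Ioo (0 : ℝ) 1,
      (K * (D ^ 2 - (1 + (D - 1) * ρ) ^ 2) = (D - 1) * (1 + (D - 1) * ρ) ^ 2 ↔
        ρ = ρstar)) := by
  have hD1 : 0 < D - 1 := by linarith
  have hE : 0 < D - 1 + K := by linarith
  set v : ℝ := D * Real.sqrt (K / (D - 1 + K)) with hvdef
  have hs2 : Real.sqrt (K / (D - 1 + K)) ^ 2 = K / (D - 1 + K) :=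
    Real.sq_sqrt (le_of_lt (div_pos hK0 hE))
  have hv2 : (D - 1 + K) * v ^ 2 = K * D ^ 2 := by
    have h : v ^ 2 = D ^ 2 * (K / (D - 1 + K)) := by rw [hvdef, mul_pow, hs2]
    rw [h]; field_simp
  have hv1 : 1 < v := hcond
  have hvD : v < D := by
    have hsnn := Real.sqrt_nonneg (K / (D - 1 + K))
    have hlt1 : K / (D - 1 + K) < 1 := (div_lt_one hE).mpr (by linarith)
    have hs1 : Real.sqrt (K / (D - 1 + K)) < 1 := by nlinarith [hs2]
    calc v < D * 1 := mul_lt_mul_of_pos_left hs1 (by linarith)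
      _ = D := by ring
  clear_value v
  clear hvdef hs2 hcond
  have hρv : 1 + (D - 1) * ρstar = v := by
    rw [hρ]; field_simp; ring
  have hv0 : 0 < v := by linarith
  have hmem : ρstar ∈ Set.Ioo (0 : ℝ) 1 := by
    constructor
    · rw [hρ]; exact div_pos (by linarith) hD1
    · rw [hρ, div_lt_one hD1]; linarith
  refine ⟨hmem, ?_, ?_⟩
  · intro ρ hρmem hne
    obtain ⟨h0, h1⟩ := hρmem
    obtain ⟨u, hudef⟩ : ∃ u : ℝ, u = 1 + (D - 1) * ρ := ⟨_, rfl⟩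
    rw [← hudef, hρv]
    have hu0 : 0 < u := by nlinarith
    have huv : u ≠ v := by
      intro h
      apply hne
      have h2 : (D - 1) * ρ = (D - 1) * ρstar := by
        rw [hudef] at h; linarith
      exact mul_left_cancel₀ (ne_of_gt hD1) h2
    have h1ρ : 1 - ρ = (D - u) / (D - 1) := by
      rw [hudef]; field_simp; ring
    have h1ρs : 1 - ρstar = (D - v) / (D - 1) := by
      rw [hρ]; field_simp; ring
    have hune : u ≠ 0 := ne_of_gt hu0
    have hvne : v ≠ 0 := ne_of_gt hv0
    have hDne : (D - 1) ≠ 0 := ne_of_gt hD1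
    have hDnpos : (0:ℝ) < (D - 1) ^ 2 * u * v := by positivity
    have hA : ((1 - ρstar) - K * (1 - ρstar) ^ 2 / v) * ((D - 1) ^ 2 * u * v) =
        (D - v) * (D - 1) * u * v - K * (D - v) ^ 2 * u := by
      rw [h1ρs]; field_simp
    have hB : ((1 - ρ) - K * (1 - ρ) ^ 2 / u) * ((D - 1) ^ 2 * u * v) =
        (D - u) * (D - 1) * u * v - K * (D - u) ^ 2 * v := by
      rw [h1ρ]; field_simp
    have hpoly : ((D - v) * (D - 1) * u * v - K * (D - v) ^ 2 * u) -
        ((D - u) * (D - 1) * u * v - K * (D - u) ^ 2 * v) =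
        (D - 1 + K) * (u - v) ^ 2 * v := by
      linear_combination (u - v) * hv2
    have hne0 : u - v ≠ 0 := sub_ne_zero.mpr huv
    have hposR : (0:ℝ) < (D - 1 + K) * (u - v) ^ 2 * v := by positivity
    have hlt : ((1 - ρ) - K * (1 - ρ) ^ 2 / u) * ((D - 1) ^ 2 * u * v) <
        ((1 - ρstar) - K * (1 - ρstar) ^ 2 / v) * ((D - 1) ^ 2 * u * v) := by
      rw [hA, hB]; linarith
    exact lt_of_mul_lt_mul_right hlt (le_of_lt hDnpos)
  · intro ρ hρmem
    obtain ⟨h0, h1⟩ := hρmem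
    obtain ⟨u, hudef⟩ : ∃ u : ℝ, u = 1 + (D - 1) * ρ := ⟨_, rfl⟩
    rw [← hudef]
    have hu0 : 0 < u := by nlinarith
    constructor
    · intro h
      have hu2 : u ^ 2 = v ^ 2 := by nlinarith [hv2]
      have huev : u = v := by
        have hle : u ≤ v := by nlinarith
        have hge : v ≤ u := by nlinarith
        linarith
      have h2 : (D - 1) * ρ = (D - 1) * ρstar := by
        rw [hudef] at huev; linarith
      exact mul_left_cancel₀ (ne_of_gt hD1) h2
    · intro h
      subst h
      rw [hudef, hρv]
      linear_combination -hv2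
end

section
/- Let 0 < K < 1, D > 1, and c > 0, and suppose D·√(K/((1+c)(D−1)+K)) > 1. Then the strictly concave function H(ρ) = (1+c)·(1−ρ) − K·(1−ρ)²/(1 + (D−1)ρ) attains its unique global maximum on (0,1) at ρ*_{in-ts} = (D·√(K/((1+c)(D−1)+K)) − 1)/(D−1). Moreover ρ*_{in-ts} < ρ*_ts = (D·√(K/(D−1+K)) − 1)/(D−1), i.e. the optimal time-switching fraction with incremental relaying is strictly smaller than without it. (This is the throughput-optimal EH parameter of the paper's Lemma for incremental relaying with TS-EH and L = 1, in exact form for the approximate throughput.) -/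
open Real Set

/-- The strictly concave incremental-relaying TS-EH objective
`H(ρ) = (1+c)(1−ρ) − K(1−ρ)²/(1+(D−1)ρ)` attains its unique global maximum on `(0,1)`
at `ρ*_{in-ts} = (D√(K/((1+c)(D−1)+K)) − 1)/(D−1)`, and this optimal time-switching
fraction is strictly smaller than `ρ*_ts = (D√(K/(D−1+K)) − 1)/(D−1)`. -/
theorem incremental_ts_eh_optimal_fraction
    (K D c : ℝ) (hK0 : 0 < K) (hK1 : K < 1) (hD : 1 < D) (hc : 0 < c)
    (hcond : 1 < D * Real.sqrt (K / ((1 + c) * (D - 1) + K)))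
    (ρin ρts : ℝ)
    (hρin : ρin = (D * Real.sqrt (K / ((1 + c) * (D - 1) + K)) - 1) / (D - 1))
    (hρts : ρts = (D * Real.sqrt (K / (D - 1 + K)) - 1) / (D - 1)) :
    ρin ∈ Set.Ioo (0 : ℝ) 1 ∧
    (∀ ρ ∈ Set.Ioo (0 : ℝ) 1, ρ ≠ ρin →
      (1 + c) * (1 - ρ) - K * (1 - ρ) ^ 2 / (1 + (D - 1) * ρ) <
        (1 + c) * (1 - ρin) - K * (1 - ρin) ^ 2 / (1 + (D - 1) * ρin)) ∧
    ρin < ρts := by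
  have ha : 0 < D - 1 := by linarith
  set A : ℝ := (1 + c) * (D - 1) + K with hA
  have hA0 : 0 < A := by positivity
  have hAK : K < A := by nlinarith
  set s : ℝ := Real.sqrt (K / A) with hs
  have hs0 : 0 < s := Real.sqrt_pos.mpr (by positivity)
  have hs2 : s ^ 2 = K / A := Real.sq_sqrt (le_of_lt (div_pos hK0 hA0))
  have hs1 : s < 1 := by
    rw [hs, show (1:ℝ) = Real.sqrt 1 by simp]
    exact Real.sqrt_lt_sqrt (by positivity) ((div_lt_one hA0).mpr hAK)
  have hDs : 1 < D * s := hcond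
  have hρin0 : 0 < ρin := by rw [hρin]; exact div_pos (by linarith) ha
  have hρin1 : ρin < 1 := by
    rw [hρin, div_lt_one ha]; nlinarith
  have htin : 1 + (D - 1) * ρin = D * s := by
    rw [hρin]; field_simp; ring
  have hrel : A * (1 + (D - 1) * ρin) ^ 2 = K * D ^ 2 := by
    rw [htin]
    have : A * (D * s) ^ 2 = A * (K / A) * D ^ 2 := by rw [← hs2]; ring
    rw [this]; field_simp
  refine ⟨⟨hρin0, hρin1⟩, ?_, ?_⟩
  · intro ρ hρ hne
    obtain ⟨hρ0, hρ1⟩ := hρ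
    have ht : 0 < 1 + (D - 1) * ρ := by nlinarith
    have htin0 : 0 < 1 + (D - 1) * ρin := by nlinarith
    have key : ((1 + c) * (1 - ρin) - K * (1 - ρin) ^ 2 / (1 + (D - 1) * ρin)) -
        ((1 + c) * (1 - ρ) - K * (1 - ρ) ^ 2 / (1 + (D - 1) * ρ)) =
        A * (ρ - ρin) ^ 2 / (1 + (D - 1) * ρ) +
          (ρ - ρin) * (A * (1 + (D - 1) * ρin) ^ 2 - K * D ^ 2) /
            ((D - 1) * (1 + (D - 1) * ρ) * (1 + (D - 1) * ρin)) := by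
      field_simp
      ring
    rw [hrel, sub_self, mul_zero, zero_div, add_zero] at key
    have hsq : 0 < (ρ - ρin) ^ 2 := pow_two_pos_of_ne_zero (sub_ne_zero.mpr hne)
    have hpos : 0 < A * (ρ - ρin) ^ 2 / (1 + (D - 1) * ρ) := by positivity
    linarith
  · rw [hρin, hρts]
    have hA'0 : 0 < D - 1 + K := by linarith
    have hlt : s < Real.sqrt (K / (D - 1 + K)) := by
      rw [hs]
      apply Real.sqrt_lt_sqrt (by positivity)
      apply div_lt_div_of_pos_left hK0 hA'0
      nlinarith
    apply div_lt_div_of_pos_right _ ha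
    nlinarith
end
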